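/- arXiv:2404.10151 — 7 statements merged into one kernel-verified Lean document; each statement's English description precedes it below -/
import Mathlib

section
/- Replay order-independence (abstracted Lemma 'the Replay algorithm reconstructs the sublist exactly'): Let i₁, …, i_k be any enumeration of {1, …, k} that respects parents, i.e., for every m, either p (i_m) = 0 or p (i_m) ∈ {i₁, …, i_{m−1}}. Define R 0 = [0] and R m = replayInsert (p (i_m)) (i_m) (R (m−1)) for 1 ≤ m ≤ k. Then R k = L k: replaying the insertion events in any parent-respecting order, using the timestamp-guided replay insertion, reconstructs exactly the sequentially built list. -/
/-- Insert `x` immediately after the (first) occurrence of `a` in the list. -/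
def insertAfter (a x : ℕ) : List ℕ → List ℕ
  | [] => []
  | b :: t => if b = a then b :: x :: t else b :: insertAfter a x t

/-- The sequential construction: `L 0 = [0]`, `L (i+1) = insertAfter (p (i+1)) (i+1) (L i)`. -/
def buildL (p : ℕ → ℕ) : ℕ → List ℕ
  | 0 => [0]
  | i + 1 => insertAfter (p (i + 1)) (i + 1) (buildL p i)

/-- Insert `x` into a list by timestamp: skip all elements greater than `x`,
and insert `x` before the first element smaller (or equal), or at the end. -/
def insertByTS (x : ℕ) : List ℕ → List ℕ
  | [] => [x]
  | b :: t => if x < b then b :: insertByTS x t else x :: b :: t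

/-- The timestamp-guided replay insertion: scan right from the occurrence of `a`,
skip all elements with timestamp greater than `x`, and insert `x` before the
first element with smaller timestamp (or at the end). -/
def replayInsert (a x : ℕ) : List ℕ → List ℕ
  | [] => []
  | b :: t => if b = a then b :: insertByTS x t else b :: replayInsert a x t

/-- `buildSet p S` performs the insertion events of `S` in increasing order of
timestamp, starting from `[0]`. -/
def buildSet (p : ℕ → ℕ) (S : Finset ℕ) : List ℕ :=
  (S.sort (· ≤ ·)).foldl (fun M i => insertAfter (p i) i M) [0]

/-- `i` is an ancestor of `j` (equivalently `j` a descendant of `i`): iterating the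
parent map `p` (extended by `p 0 = 0`) starting from `j` reaches `i`. -/
def isAncestor (p : ℕ → ℕ) (i j : ℕ) : Prop :=
  ∃ n : ℕ, (fun m => if m = 0 then 0 else p m)^[n] j = i

namespace ReplayAux

lemma insertAfter_cons_self (a x : ℕ) (t : List ℕ) :
    insertAfter a x (a :: t) = a :: x :: t := by simp [insertAfter]

lemma insertAfter_cons_ne {a b : ℕ} (x : ℕ) (t : List ℕ) (h : b ≠ a) :
    insertAfter a x (b :: t) = b :: insertAfter a x t := by simp [insertAfter, h]

lemma insertAfter_append_right {a : ℕ} (x : ℕ) {l₁ : List ℕ} (l₂ : List ℕ) (h : a ∉ l₁) :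
    insertAfter a x (l₁ ++ l₂) = l₁ ++ insertAfter a x l₂ := by
  induction l₁ with
  | nil => simp
  | cons b t ih =>
    have hb : b ≠ a := fun hba => h (by simp [hba])
    simp only [List.cons_append, insertAfter_cons_ne x _ hb]
    rw [ih (fun ht => h (List.mem_cons_of_mem _ ht))]

lemma insertAfter_append_left {a : ℕ} (x : ℕ) {l₁ : List ℕ} (l₂ : List ℕ) (h : a ∈ l₁) :
    insertAfter a x (l₁ ++ l₂) = insertAfter a x l₁ ++ l₂ := by
  induction l₁ with
  | nil => simp at h
  | cons b t ih =>
    by_cases hb : b = a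
    · subst hb; simp [insertAfter_cons_self]
    · have ht : a ∈ t := by rcases List.mem_cons.1 h with h' | h'; exact absurd h'.symm hb; exact h'
      simp only [List.cons_append, insertAfter_cons_ne x _ hb, ih ht]

lemma insertAfter_split {a x : ℕ} {u v : List ℕ} (h : a ∉ u) :
    insertAfter a x (u ++ a :: v) = u ++ a :: x :: v := by
  rw [insertAfter_append_right x _ h, insertAfter_cons_self]

lemma mem_insertAfter {a x t : ℕ} {M : List ℕ} (h : t ∈ insertAfter a x M) : t ∈ M ∨ t = x := by
  induction M with
  | nil => simp [insertAfter] at h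
  | cons b l ih =>
    by_cases hb : b = a
    · subst hb; rw [insertAfter_cons_self] at h
      rcases List.mem_cons.1 h with h' | h'
      · exact Or.inl (by simp [h'])
      rcases List.mem_cons.1 h' with h'' | h''
      · exact Or.inr h''
      · exact Or.inl (List.mem_cons_of_mem _ h'')
    · rw [insertAfter_cons_ne x _ hb] at h
      rcases List.mem_cons.1 h with h' | h'
      · exact Or.inl (by simp [h'])
      · rcases ih h' with h'' | h''; exact Or.inl (List.mem_cons_of_mem _ h''); exact Or.inr h''

lemma insertAfter_perm {a x : ℕ} {M : List ℕ} (h : a ∈ M) :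
    (insertAfter a x M).Perm (x :: M) := by
  induction M with
  | nil => simp at h
  | cons b l ih =>
    by_cases hb : b = a
    · subst hb; rw [insertAfter_cons_self]; exact List.Perm.swap x b l
    · have ht : a ∈ l := by
        rcases List.mem_cons.1 h with h' | h'; exact absurd h'.symm hb; exact h'
      rw [insertAfter_cons_ne x _ hb]
      exact ((ih ht).cons b).trans (List.Perm.swap x b l)

end ReplayAux

namespace ReplayAux
section BuildFacts
variable {k : ℕ} {p : ℕ → ℕ}

lemma buildL_perm (hp : ∀ i, 1 ≤ i → i ≤ k → p i < i) :
    ∀ i, i ≤ k → (buildL p i).Perm (List.range (i + 1)) := by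
  intro i
  induction i with
  | zero => intro _; simp [buildL, List.range_succ]
  | succ i ih =>
    intro hi
    have ih := ih (Nat.le_of_succ_le hi)
    have hpmem : p (i + 1) ∈ buildL p i :=
      ih.mem_iff.2 (List.mem_range.2 (hp (i+1) (Nat.le_add_left 1 i) hi))
    have h1 : (buildL p (i+1)).Perm ((i+1) :: buildL p i) := insertAfter_perm hpmem
    refine h1.trans ((ih.cons _).trans ?_)
    conv_rhs => rw [List.range_succ]
    exact (List.perm_append_singleton _ _).symm

lemma buildL_nodup (hp : ∀ i, 1 ≤ i → i ≤ k → p i < i) (i : ℕ) (hi : i ≤ k) :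
    (buildL p i).Nodup :=
  ((buildL_perm hp i hi).nodup_iff).2 List.nodup_range

lemma mem_buildL (hp : ∀ i, 1 ≤ i → i ≤ k → p i < i) {i y : ℕ} (hi : i ≤ k) :
    y ∈ buildL p i ↔ y < i + 1 := by
  rw [(buildL_perm hp i hi).mem_iff, List.mem_range]

lemma buildL_between (hp : ∀ i, 1 ≤ i → i ≤ k → p i < i) :
    ∀ i, i ≤ k → ∀ y, 1 ≤ y → y ≤ i →
    ∃ u w v, buildL p i = u ++ p y :: (w ++ y :: v) ∧ ∀ z ∈ w, y < z := by
  intro i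
  induction i with
  | zero => intro _ y h1 h2; exact absurd (le_trans h1 h2) (by norm_num)
  | succ i ihh =>
    intro hi y h1 h2
    by_cases hy : y = i + 1
    · have hpm : p y ∈ buildL p i := by
        rw [mem_buildL hp (Nat.le_of_succ_le hi)]
        have h3 := hp y h1 (le_trans h2 hi)
        omega
      obtain ⟨u, v, huv⟩ := List.append_of_mem hpm
      have hnd : (buildL p i).Nodup := buildL_nodup hp i (Nat.le_of_succ_le hi)
      have hnu : p y ∉ u := by
        rw [huv, List.nodup_append] at hnd
        exact fun hmem => hnd.2.2 _ hmem _ List.mem_cons_self rfl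
      refine ⟨u, [], v, ?_, by simp⟩
      have hb : buildL p (i+1) = insertAfter (p y) y (buildL p i) := by rw [hy]; rfl
      rw [hb, huv, insertAfter_split hnu]; rfl
    · have h2' : y ≤ i := Nat.lt_succ_iff.1 (Nat.lt_of_le_of_ne h2 hy)
      obtain ⟨u, w, v, hsp, hw⟩ := ihh (Nat.le_of_succ_le hi) y h1 h2'
      set a := p (i + 1) with ha
      set x := i + 1 with hx
      have hxy : y < x := Nat.lt_succ_of_le h2'
      have hgoal : buildL p (i+1) = insertAfter a x (u ++ p y :: (w ++ y :: v)) := by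
        rw [← hsp]; rfl
      by_cases hau : a ∈ u
      · exact ⟨insertAfter a x u, w, v,
          by rw [hgoal, insertAfter_append_left x _ hau], hw⟩
      · rw [insertAfter_append_right x _ hau] at hgoal
        by_cases hab : p y = a
        · have : insertAfter a x (p y :: (w ++ y :: v)) = p y :: x :: (w ++ y :: v) := by
            rw [hab]; exact insertAfter_cons_self a x _
          rw [this] at hgoal
          refine ⟨u, x :: w, v, by rw [hgoal]; simp, ?_⟩
          intro z hz
          rcases List.mem_cons.1 hz with h' | h'
          · rw [h']; exact hxy
          · exact hw z h'
        · rw [insertAfter_cons_ne x _ hab] at hgoal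
          by_cases haw : a ∈ w
          · rw [insertAfter_append_left x _ haw] at hgoal
            refine ⟨u, insertAfter a x w, v, hgoal, ?_⟩
            intro z hz
            rcases mem_insertAfter hz with h' | h'
            · exact hw z h'
            · rw [h']; exact hxy
          · rw [insertAfter_append_right x _ haw] at hgoal
            by_cases hay : y = a
            · have : insertAfter a x (y :: v) = y :: x :: v := by
                rw [hay]; exact insertAfter_cons_self a x _
              rw [this] at hgoal
              exact ⟨u, w, x :: v, hgoal, hw⟩
            · rw [insertAfter_cons_ne x _ hay] at hgoal
              exact ⟨u, w, insertAfter a x v, hgoal, hw⟩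

end BuildFacts
end ReplayAux

namespace ReplayAux

lemma idxOf_append_left {z : ℕ} {u : List ℕ} (r : List ℕ) (h : z ∈ u) :
    List.idxOf z (u ++ r) = List.idxOf z u := by
  induction u with
  | nil => simp at h
  | cons b t ih =>
    by_cases hb : b = z
    · subst hb; simp [List.idxOf_cons_self]
    · rw [List.cons_append, List.idxOf_cons_ne _ hb, List.idxOf_cons_ne _ hb]
      have : z ∈ t := by rcases List.mem_cons.1 h with h'|h'; exact absurd h'.symm hb; exact h'
      rw [ih this]

-- index of elements in a nodup split
lemma idx_split_base {M u r : List ℕ} {b : ℕ} (hM : M.Nodup) (hs : M = u ++ b :: r) :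
    List.idxOf b M = u.length := by
  have hnu : b ∉ u := by
    rw [hs, List.nodup_append] at hM
    exact fun hmem => hM.2.2 _ hmem _ List.mem_cons_self rfl
  rw [hs, List.idxOf_append_of_notMem hnu, List.idxOf_cons_self]; omega

lemma idx_mem_left {M u r : List ℕ} {z : ℕ} (hs : M = u ++ r) (h : z ∈ u) :
    List.idxOf z M < u.length := by
  rw [hs, idxOf_append_left r h]
  exact List.idxOf_lt_length_iff.2 h

lemma idx_mem_right {M u r : List ℕ} {z : ℕ} (hM : M.Nodup) (hs : M = u ++ r) (h : z ∈ r) :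
    List.idxOf z M = u.length + List.idxOf z r := by
  have hnu : z ∉ u := by
    rw [hs, List.nodup_append] at hM
    exact fun hmem => hM.2.2 _ hmem _ h rfl
  rw [hs, List.idxOf_append_of_notMem hnu]

lemma between_facts {M : List ℕ} (hM : M.Nodup) {u w v : List ℕ} {b y : ℕ}
    (hsplit : M = u ++ b :: (w ++ y :: v)) (hw : ∀ z ∈ w, y < z) :
    List.idxOf b M < List.idxOf y M ∧
    List.idxOf y M = u.length + 1 + w.length ∧
    ∀ z ∈ M, List.idxOf b M < List.idxOf z M → List.idxOf z M < List.idxOf y M → y < z := by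
  have hb : List.idxOf b M = u.length := idx_split_base hM hsplit
  have hyw : y ∉ w := fun h => lt_irrefl y (hw y h)
  have hsplit2 : M = (u ++ [b]) ++ (w ++ y :: v) := by rw [hsplit]; simp
  have hy : List.idxOf y M = u.length + 1 + w.length := by
    rw [idx_mem_right hM hsplit2 (by simp),
      List.idxOf_append_of_notMem hyw, List.idxOf_cons_self]
    simp [Nat.add_comm, Nat.add_assoc, Nat.add_left_comm]
  refine ⟨by omega, hy, ?_⟩
  intro z hz h1 h2
  rw [hsplit] at hz
  rcases List.mem_append.1 hz with hz | hz
  · exact absurd (idx_mem_left hsplit hz) (by omega)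
  rcases List.mem_cons.1 hz with hz | hz
  · subst hz; omega
  rcases List.mem_append.1 hz with hz | hz
  · exact hw z hz
  rcases List.mem_cons.1 hz with hz | hz
  · subst hz; omega
  · -- z ∈ v
    have hsplit3 : M = (u ++ b :: w ++ [y]) ++ v := by rw [hsplit]; simp
    have := idx_mem_right hM hsplit3 hz
    have hlen : (u ++ b :: w ++ [y]).length = u.length + w.length + 2 := by
      simp; omega
    omega

end ReplayAux

namespace ReplayAux

lemma buildL_head (p : ℕ → ℕ) : ∀ i, ∃ t, buildL p i = 0 :: t := by
  intro i
  induction i with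
  | zero => exact ⟨[], rfl⟩
  | succ i ih =>
    obtain ⟨t, ht⟩ := ih
    show ∃ t', insertAfter (p (i+1)) (i+1) (buildL p i) = 0 :: t'
    rw [ht]
    by_cases h : (0:ℕ) = p (i+1)
    · rw [← h, insertAfter_cons_self]; exact ⟨_, rfl⟩
    · rw [insertAfter_cons_ne _ _ h]; exact ⟨_, rfl⟩

lemma replayInsert_split {a x : ℕ} {u v : List ℕ} (h : a ∉ u) :
    replayInsert a x (u ++ a :: v) = u ++ a :: insertByTS x v := by
  induction u with
  | nil => simp [replayInsert]
  | cons b t ih =>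
    have hb : b ≠ a := fun hba => h (by simp [hba])
    simp only [List.cons_append, replayInsert, if_neg hb, List.append_eq]
    rw [ih (fun ht => h (List.mem_cons_of_mem _ ht))]

lemma insertByTS_skip {x : ℕ} {w : List ℕ} (v : List ℕ) (h : ∀ z ∈ w, x < z) :
    insertByTS x (w ++ v) = w ++ insertByTS x v := by
  induction w with
  | nil => rfl
  | cons b t ih =>
    have hb : x < b := h b (by simp)
    simp only [List.cons_append, insertByTS, if_pos hb, List.append_eq]
    rw [ih (fun z hz => h z (List.mem_cons_of_mem _ hz))]

lemma insertByTS_stop {x : ℕ} {v : List ℕ} (h : ∀ z, v.head? = some z → ¬ x < z) :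
    insertByTS x v = x :: v := by
  cases v with
  | nil => rfl
  | cons b t => simp [insertByTS, h b rfl]

lemma step_lemma {k : ℕ} {p : ℕ → ℕ} (hp : ∀ i, 1 ≤ i → i ≤ k → p i < i)
    (S : Finset ℕ) (hScl : ∀ y ∈ S, p y = 0 ∨ p y ∈ S)
    (hSk : ∀ y ∈ S, 1 ≤ y ∧ y ≤ k)
    {x : ℕ} (hx1 : 1 ≤ x) (hxk : x ≤ k) (hxS : x ∉ S)
    (hpx : p x = 0 ∨ p x ∈ S) :
    replayInsert (p x) x ((buildL p k).filter (fun y => decide (y = 0 ∨ y ∈ S)))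
      = (buildL p k).filter (fun y => decide (y = 0 ∨ y ∈ insert x S)) := by
  set M := buildL p k with hMdef
  have hM : M.Nodup := buildL_nodup hp k le_rfl
  obtain ⟨A, B, C, hsp, hB⟩ := buildL_between hp k le_rfl x hx1 hxk
  rw [← hMdef] at hsp
  set P : ℕ → Bool := fun y => decide (y = 0 ∨ y ∈ S) with hP
  set P' : ℕ → Bool := fun y => decide (y = 0 ∨ y ∈ insert x S) with hP'
  have hpxx : p x < x := hp x hx1 hxk
  have hx0 : x ≠ 0 := by omega
  -- nodup pieces
  have hMsp : (A ++ p x :: (B ++ x :: C)).Nodup := by rw [← hsp]; exact hM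
  rw [List.nodup_append] at hMsp
  obtain ⟨hAnd, hrest, hdisjA⟩ := hMsp
  have hpxA : p x ∉ A := fun h => hdisjA _ h _ List.mem_cons_self rfl
  have hxA : x ∉ A := fun h => hdisjA _ h _ (by simp) rfl
  have hrest' : (B ++ x :: C).Nodup := hrest.of_cons
  rw [List.nodup_append] at hrest'
  obtain ⟨hBnd, hxCnd, hdisjB⟩ := hrest'
  have hxB : x ∉ B := fun h => hdisjB _ h _ (by simp) rfl
  have hCnd : C.Nodup := hxCnd.of_cons
  have hxC : x ∉ C := (List.nodup_cons.1 hxCnd).1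
  -- predicate facts
  have hPpx : P (p x) = true := by simp only [hP]; rcases hpx with h | h <;> simp [h]
  have hPx : P x = false := by simp [hP, hx0, hxS]
  have hP'x : P' x = true := by simp [hP']
  have hPP' : ∀ y, y ≠ x → P' y = P y := by
    intro y hy; simp [hP, hP', Finset.mem_insert, hy]
  have hfA : A.filter P' = A.filter P :=
    List.filter_congr (fun a ha => hPP' a (fun h => hxA (h ▸ ha)))
  have hfB : B.filter P' = B.filter P :=
    List.filter_congr (fun a ha => hPP' a (fun h => hxB (h ▸ ha)))
  have hfC : C.filter P' = C.filter P :=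
    List.filter_congr (fun a ha => hPP' a (fun h => hxC (h ▸ ha)))
  have hP'px : P' (p x) = true := by
    rcases eq_or_ne (p x) x with h | h
    · omega
    · rw [hPP' _ h]; exact hPpx
  have hFP : M.filter P = A.filter P ++ p x :: (B.filter P ++ C.filter P) := by
    rw [hsp]
    simp [List.filter_append, List.filter_cons, hPpx, hPx]
  have hFP' : M.filter P' = A.filter P ++ p x :: (B.filter P ++ x :: C.filter P) := by
    rw [hsp]
    simp [List.filter_append, List.filter_cons, hP'px, hP'x, hfA, hfB, hfC]
  -- the stop condition: first surviving element of C is smaller than x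
  have hstop : ∀ z, (C.filter P).head? = some z → ¬ x < z := by
    intro z hz hxz
    obtain ⟨r, hr⟩ : ∃ r, C.filter P = z :: r := by
      cases h : C.filter P with
      | nil => rw [h] at hz; simp at hz
      | cons b t => rw [h] at hz; simp at hz; exact ⟨t, by rw [hz]⟩
    obtain ⟨C1, C2, hC, hC1, hPz, hrC2⟩ := List.filter_eq_cons_iff.1 hr
    have hz0 : z ≠ 0 := by omega
    have hzS : z ∈ S := by
      have := hPz; simp [hP, hz0] at this; exact this
    obtain ⟨hz1, hzk⟩ := hSk z hzS
    obtain ⟨u', w', v', hsp', hw'⟩ := buildL_between hp k le_rfl z hz1 hzk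
    rw [← hMdef] at hsp'
    obtain ⟨hlt', _, hbet'⟩ := between_facts hM hsp' hw'
    set D := A ++ p x :: B with hD
    have hspD : M = D ++ x :: C := by rw [hsp, hD]; simp
    have hDlen : 1 ≤ D.length := by rw [hD]; simp; omega
    have hidxx : M.idxOf x = D.length := idx_split_base hM hspD
    have hspD2 : M = (D ++ [x]) ++ C := by rw [hspD]; simp
    have hzC : z ∈ C := by rw [hC]; simp
    have hidxz : M.idxOf z = D.length + 1 + C.idxOf z := by
      rw [idx_mem_right hM hspD2 hzC]; simp
    have hxM : x ∈ M := by rw [hspD]; simp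
    have hzM : z ∈ M := by rw [hspD]; simp [hzC]
    have hpzM : p z ∈ M := by
      rw [hMdef, mem_buildL hp le_rfl]
      have := hp z hz1 hzk; omega
    have hxz_idx : M.idxOf x < M.idxOf z := by omega
    have hge : ¬ M.idxOf (p z) < M.idxOf x := by
      intro hlt
      have := hbet' x hxM hlt hxz_idx
      omega
    rcases hScl z hzS with hpz0 | hpzS
    · -- p z = 0, index 0, contradiction
      obtain ⟨t0, ht0⟩ := buildL_head p k
      have : M.idxOf (p z) = 0 := by
        rw [hpz0, hMdef, ht0, List.idxOf_cons_self]
      omega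
    · have hpzx : p z ≠ x := fun h => hxS (h ▸ hpzS)
      have hne : M.idxOf (p z) ≠ M.idxOf x :=
        fun h => hpzx ((List.idxOf_inj hpzM (y := x)).1 h)
      have hgt : M.idxOf x < M.idxOf (p z) := by omega
      have hpzC : p z ∈ C := by
        have hmem : p z ∈ D ++ x :: C := by rw [← hspD]; exact hpzM
        rcases List.mem_append.1 hmem with h | h
        · exact absurd (idx_mem_left hspD h) (by omega)
        · rcases List.mem_cons.1 h with h | h
          · exact absurd h hpzx
          · exact h
      have hidxpz : M.idxOf (p z) = D.length + 1 + C.idxOf (p z) := by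
        rw [idx_mem_right hM hspD2 hpzC]; simp
      have hCidx : C.idxOf (p z) < C.idxOf z := by omega
      -- but p z survives the filter and z is the first survivor in C
      have hPpz : P (p z) = true := by simp [hP, hpzS]
      have hpzz : p z ≠ z := by have := hp z hz1 hzk; omega
      have hpzC2 : p z ∈ C2 := by
        rw [hC] at hpzC
        rcases List.mem_append.1 hpzC with h | h
        · exact absurd hPpz (by simpa using hC1 _ h)
        · rcases List.mem_cons.1 h with h | h
          · exact absurd h hpzz
          · exact h
      have hCz : C.idxOf z = C1.length := idx_split_base hCnd hC
      have hCsp2 : C = (C1 ++ [z]) ++ C2 := by rw [hC]; simp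
      have hCpz : C.idxOf (p z) = C1.length + 1 + C2.idxOf (p z) := by
        rw [idx_mem_right hCnd hCsp2 hpzC2]; simp
      omega
  -- assemble
  have hpxFA : p x ∉ A.filter P := fun h => hpxA (List.mem_of_mem_filter h)
  have hBgt : ∀ z ∈ B.filter P, x < z := fun z hz => hB z (List.mem_of_mem_filter hz)
  rw [hFP, replayInsert_split hpxFA, insertByTS_skip _ hBgt, insertByTS_stop hstop, hFP']

end ReplayAux

namespace ReplayAux

lemma fold_inv {k : ℕ} {p : ℕ → ℕ} (hp : ∀ i, 1 ≤ i → i ≤ k → p i < i) :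
    ∀ (l : List ℕ) (S : Finset ℕ),
    (∀ y ∈ S, p y = 0 ∨ p y ∈ S) → (∀ y ∈ S, 1 ≤ y ∧ y ≤ k) →
    l.Nodup → (∀ i ∈ l, (1 ≤ i ∧ i ≤ k) ∧ i ∉ S) →
    (∀ (m : ℕ) (hm : m < l.length),
      p (l[m]'hm) = 0 ∨ p (l[m]'hm) ∈ S ∨ p (l[m]'hm) ∈ l.take m) →
    l.foldl (fun M i => replayInsert (p i) i M)
        ((buildL p k).filter (fun y => decide (y = 0 ∨ y ∈ S)))
      = (buildL p k).filter (fun y => decide (y = 0 ∨ y ∈ S ∪ l.toFinset)) := by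
  intro l
  induction l with
  | nil => intro S _ _ _ _ _; simp
  | cons i l ih =>
    intro S hScl hSk hnd hmem hpar
    have hi := hmem i (by simp)
    have hpi : p i = 0 ∨ p i ∈ S := by
      have h0 := hpar 0 (by simp)
      simpa using h0
    have hil : i ∉ l := (List.nodup_cons.1 hnd).1
    rw [List.foldl_cons, step_lemma hp S hScl hSk hi.1.1 hi.1.2 hi.2 hpi]
    have hrec := ih (insert i S)
      (by
        intro y hy
        rcases Finset.mem_insert.1 hy with hy | hy
        · subst hy
          rcases hpi with h | h
          · exact Or.inl h
          · exact Or.inr (Finset.mem_insert_of_mem h)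
        · rcases hScl y hy with h | h
          · exact Or.inl h
          · exact Or.inr (Finset.mem_insert_of_mem h))
      (by
        intro y hy
        rcases Finset.mem_insert.1 hy with hy | hy
        · subst hy; exact hi.1
        · exact hSk y hy)
      ((List.nodup_cons.1 hnd).2)
      (by
        intro j hj
        refine ⟨(hmem j (List.mem_cons_of_mem _ hj)).1, ?_⟩
        intro hjS
        rcases Finset.mem_insert.1 hjS with h | h
        · exact hil (h ▸ hj)
        · exact (hmem j (List.mem_cons_of_mem _ hj)).2 h)
      (by
        intro m hm
        have h := hpar (m + 1) (by simpa using Nat.succ_lt_succ hm)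
        rw [List.getElem_cons_succ] at h
        rcases h with h | h | h
        · exact Or.inl h
        · exact Or.inr (Or.inl (Finset.mem_insert_of_mem h))
        · rw [List.take_succ_cons] at h
          rcases List.mem_cons.1 h with h | h
          · exact Or.inr (Or.inl (by rw [h]; exact Finset.mem_insert_self _ _))
          · exact Or.inr (Or.inr h))
    rw [hrec]
    have hset : insert i S ∪ l.toFinset = S ∪ (i :: l).toFinset := by
      rw [List.toFinset_cons, Finset.insert_union, Finset.union_insert]
    rw [hset]

end ReplayAux

/-- Replay order-independence: replaying the insertion events in any
parent-respecting order, using the timestamp-guided replay insertion,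
reconstructs exactly the sequentially built list. -/
theorem replay_order_independence
    (k : ℕ) (p : ℕ → ℕ) (hp : ∀ i, 1 ≤ i → i ≤ k → p i < i)
    (e : List ℕ) (he : e.Perm (List.range' 1 k))
    (hpar : ∀ (m : ℕ) (hm : m < e.length),
      p (e[m]'hm) = 0 ∨ p (e[m]'hm) ∈ e.take m) :
    e.foldl (fun M i => replayInsert (p i) i M) [0] = buildL p k := by
  classical
  open ReplayAux in
  have hend : e.Nodup := he.nodup_iff.2 (List.nodup_range')
  have hmem_e : ∀ i ∈ e, 1 ≤ i ∧ i ≤ k := by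
    intro i hi
    have := List.mem_range'_1.1 (he.mem_iff.1 hi)
    omega
  have hMnd : (buildL p k).Nodup := ReplayAux.buildL_nodup hp k le_rfl
  obtain ⟨t, ht⟩ := ReplayAux.buildL_head p k
  have h0t : (0:ℕ) ∉ t := by
    rw [ht, List.nodup_cons] at hMnd
    exact hMnd.1
  have hstart : ([0] : List ℕ)
      = (buildL p k).filter (fun y => decide (y = 0 ∨ y ∈ (∅ : Finset ℕ))) := by
    rw [ht, List.filter_cons]
    simp only [Finset.notMem_empty, or_false]
    rw [List.filter_eq_nil_iff.2 (fun a ha => by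
      simp only [decide_eq_true_eq]
      exact fun h => h0t (h ▸ ha))]
    simp
  rw [hstart]
  rw [ReplayAux.fold_inv hp e ∅ (by simp) (by simp) hend
    (fun i hi => ⟨hmem_e i hi, by simp⟩)
    (by
      intro m hm
      rcases hpar m hm with h | h
      · exact Or.inl h
      · exact Or.inr (Or.inr h))]
  apply List.filter_eq_self.2
  intro a ha
  simp only [Finset.empty_union, List.mem_toFinset, decide_eq_true_eq]
  rcases Nat.eq_zero_or_pos a with h | h
  · exact Or.inl h
  · refine Or.inr (he.mem_iff.2 (List.mem_range'_1.2 ?_))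
    have hak : a < k + 1 := (ReplayAux.mem_buildL hp le_rfl).1 ha
    omega
end

section
/- Parent-closed restriction lemma: Let S ⊆ {1, …, k} be parent-closed. Then the sublist of L k obtained by keeping only the entry 0 and the entries belonging to S (i.e., filtering L k by membership in S ∪ {0}, preserving order) equals build S. In other words, the elements of a parent-closed set of insertion events appear in L k in exactly the relative order they would have if only those events had been performed. -/
lemma insertAfter_mem {a x y : ℕ} : ∀ {M : List ℕ}, y ∈ insertAfter a x M → y = x ∨ y ∈ M
  | [], h => by simp [insertAfter] at h
  | b :: t, h => by
    by_cases hb : b = a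
    · simp only [insertAfter, if_pos hb, List.mem_cons] at h
      rcases h with h | h | h
      · exact Or.inr (by simp [h])
      · exact Or.inl h
      · exact Or.inr (by simp [h])
    · simp only [insertAfter, if_neg hb, List.mem_cons] at h
      rcases h with h | h
      · exact Or.inr (by simp [h])
      · rcases insertAfter_mem h with h | h
        · exact Or.inl h
        · exact Or.inr (by simp [h])

lemma filter_insertAfter_neg (pr : ℕ → Bool) (a x : ℕ) (hx : pr x = false) :
    ∀ M : List ℕ, (insertAfter a x M).filter pr = M.filter pr
  | [] => rfl
  | b :: t => by
    by_cases hb : b = a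
    · simp [insertAfter, hb, List.filter, hx]
    · simp [insertAfter, hb, List.filter, filter_insertAfter_neg pr a x hx t]

lemma filter_insertAfter_pos (pr : ℕ → Bool) (a x : ℕ) (hx : pr x = true) (ha : pr a = true) :
    ∀ M : List ℕ, (insertAfter a x M).filter pr = insertAfter a x (M.filter pr)
  | [] => rfl
  | b :: t => by
    by_cases hb : b = a
    · subst hb
      simp [insertAfter, List.filter, ha, hx]
    · by_cases hbp : pr b = true
      · simp [insertAfter, hb, List.filter, hbp, filter_insertAfter_pos pr a x hx ha t]
      · simp only [Bool.not_eq_true] at hbp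
        simp [insertAfter, hb, List.filter, hbp, filter_insertAfter_pos pr a x hx ha t]

lemma buildL_mem_le (p : ℕ → ℕ) : ∀ {n x : ℕ}, x ∈ buildL p n → x ≤ n
  | 0, x, h => by simp [buildL] at h; omega
  | n + 1, x, h => by
    rcases insertAfter_mem h with h | h
    · omega
    · exact le_trans (buildL_mem_le p h) (by omega)

lemma sort_erase_max (S : Finset ℕ) (k : ℕ) (hk : k ∈ S) (hmax : ∀ i ∈ S, i ≤ k) :
    S.sort (· ≤ ·) = (S.erase k).sort (· ≤ ·) ++ [k] := by
  refine List.Perm.eq_of_pairwise' (S.pairwise_sort _) ?_ ?_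
  swap
  · have h1 : ((S.erase k).sort (· ≤ ·) ++ [k]).Perm (k :: (S.erase k).sort (· ≤ ·)) := by
      exact List.perm_append_singleton k _
    have h3 : (k :: (S.erase k).sort (· ≤ ·)).Perm (k :: (S.erase k).toList) :=
      ((S.erase k).sort_perm_toList _).cons k
    have h2 : (k :: (S.erase k).toList).Perm S.toList := by
      have := Finset.toList_insert (Finset.notMem_erase k S)
      rw [Finset.insert_erase hk] at this
      exact this.symm
    exact (S.sort_perm_toList _).trans ((h1.trans (h3.trans h2)).symm)
  · rw [List.pairwise_append]
    refine ⟨(S.erase k).pairwise_sort _, by simp, ?_⟩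
    intro a ha b hb
    simp only [List.mem_singleton] at hb
    subst hb
    exact hmax a (Finset.mem_of_mem_erase ((Finset.mem_sort _).1 ha))

/-- Parent-closed restriction lemma: filtering the final list `L k` to the
entry `0` and the entries of a parent-closed set `S` yields exactly `build S`. -/
theorem parent_closed_restriction
    (k : ℕ) (p : ℕ → ℕ) (hp : ∀ i, 1 ≤ i → i ≤ k → p i < i)
    (S : Finset ℕ) (hS : S ⊆ Finset.Icc 1 k)
    (hclosed : ∀ i ∈ S, p i = 0 ∨ p i ∈ S) :
    (buildL p k).filter (fun x => x = 0 || decide (x ∈ S)) = buildSet p S := by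
  induction k generalizing S with
  | zero =>
    have hSe : S = ∅ := by
      ext i; simp only [Finset.notMem_empty, iff_false]
      intro hi; have := hS hi; simp at this
    subst hSe
    simp [buildL, buildSet, List.filter]
  | succ k ih =>
    by_cases hkS : (k + 1) ∈ S
    · -- k+1 ∈ S
      have hmax : ∀ i ∈ S, i ≤ k + 1 := fun i hi => (Finset.mem_Icc.1 (hS hi)).2
      have hsort := sort_erase_max S (k + 1) hkS hmax
      have hbuild : buildSet p S
          = insertAfter (p (k + 1)) (k + 1) (buildSet p (S.erase (k + 1))) := by
        rw [buildSet, hsort, List.foldl_append]; rfl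
      rw [hbuild]
      set pr : ℕ → Bool := fun x => x = 0 || decide (x ∈ S) with hpr
      have hx : pr (k + 1) = true := by simp [hpr, hkS]
      have ha : pr (p (k + 1)) = true := by
        rcases hclosed (k + 1) hkS with h | h <;> simp [hpr, h]
      rw [show buildL p (k + 1) = insertAfter (p (k + 1)) (k + 1) (buildL p k) from rfl]
      rw [filter_insertAfter_pos pr _ _ hx ha]
      congr 1
      have hfe : (buildL p k).filter pr
          = (buildL p k).filter (fun x => x = 0 || decide (x ∈ S.erase (k + 1))) := by
        apply List.filter_congr
        intro x hx
        have hxk : x ≤ k := buildL_mem_le p hx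
        have hne : x ≠ k + 1 := by omega
        simp [hpr, Finset.mem_erase, hne]
      rw [hfe]
      apply ih
      · intro i h1 h2; exact hp i h1 (by omega)
      · intro i hi
        have := Finset.mem_Icc.1 (hS (Finset.mem_of_mem_erase hi))
        have hne := Finset.ne_of_mem_erase hi
        exact Finset.mem_Icc.2 ⟨this.1, by omega⟩
      · intro i hi
        have hiS := Finset.mem_of_mem_erase hi
        rcases hclosed i hiS with h | h
        · exact Or.inl h
        · refine Or.inr (Finset.mem_erase.2 ⟨?_, h⟩)
          have hi1 : 1 ≤ i := (Finset.mem_Icc.1 (hS hiS)).1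
          have hik : i ≤ k + 1 := (Finset.mem_Icc.1 (hS hiS)).2
          have hne := Finset.ne_of_mem_erase hi
          have := hp i hi1 hik
          omega
    · -- k+1 ∉ S
      have hx : (fun x => decide (x = 0) || decide (x ∈ S)) (k + 1) = false := by
        simp [hkS]
      rw [show buildL p (k + 1) = insertAfter (p (k + 1)) (k + 1) (buildL p k) from rfl]
      rw [filter_insertAfter_neg _ _ _ hx]
      apply ih
      · intro i h1 h2; exact hp i h1 (by omega)
      · intro i hi
        have := Finset.mem_Icc.1 (hS hi)
        have : i ≠ k + 1 := fun h => hkS (h ▸ hi)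
        exact Finset.mem_Icc.2 ⟨(Finset.mem_Icc.1 (hS hi)).1, by omega⟩
      · exact hclosed
end

section
/- Replay step lemma (inductive core of the replay correctness): Let S ⊆ {1, …, k} be parent-closed, and let x ∈ {1, …, k} with x ∉ S and p x ∈ S ∪ {0}. Then replayInsert (p x) x (build S) = build (S ∪ {x}). That is, inserting x by scanning right from its parent, skipping all elements with timestamp greater than x, and inserting before the first element with timestamp smaller than x (or at the end), produces exactly the list that the sequential construction over S ∪ {x} produces. -/
/- ### Auxiliary lemmas -/

lemma mem_insertAfter_of_mem {a x y : ℕ} {M : List ℕ} (h : y ∈ M) :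
    y ∈ insertAfter a x M := by
  induction M with
  | nil => simp at h
  | cons b t ih =>
    simp only [insertAfter]
    rcases List.mem_cons.mp h with h | h
    · split <;> simp [h]
    · split
      · simp [h]
      · simp [ih h]

lemma mem_of_mem_insertAfter {a x y : ℕ} {M : List ℕ}
    (h : y ∈ insertAfter a x M) : y = x ∨ y ∈ M := by
  induction M with
  | nil => simp [insertAfter] at h
  | cons b t ih =>
    simp only [insertAfter] at h
    split at h
    · rcases List.mem_cons.mp h with h | h
      · right; simp [h]
      · rcases List.mem_cons.mp h with h | h
        · left; exact h
        · right; simp [h]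
    · rcases List.mem_cons.mp h with h | h
      · right; simp [h]
      · rcases ih h with h | h
        · left; exact h
        · right; simp [h]

lemma self_mem_insertAfter {a x : ℕ} {M : List ℕ} (h : a ∈ M) :
    x ∈ insertAfter a x M := by
  induction M with
  | nil => simp at h
  | cons b t ih =>
    simp only [insertAfter]
    by_cases hb : b = a
    · simp [hb]
    · rcases List.mem_cons.mp h with h | h
      · exact absurd h.symm hb
      · simp [hb, ih h]

lemma insertByTS_eq_cons {x : ℕ} {t : List ℕ} (h : ∀ b ∈ t, b < x) :
    insertByTS x t = x :: t := by
  cases t with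
  | nil => rfl
  | cons b t' =>
    have : ¬ x < b := not_lt.mpr (le_of_lt (h b (by simp)))
    simp [insertByTS, this]

lemma replayInsert_eq_insertAfter {a x : ℕ} {M : List ℕ}
    (ha : a ∈ M) (h : ∀ b ∈ M, b < x) :
    replayInsert a x M = insertAfter a x M := by
  induction M with
  | nil => simp at ha
  | cons b t ih =>
    simp only [replayInsert, insertAfter]
    by_cases hb : b = a
    · simp only [hb, if_true]
      rw [insertByTS_eq_cons (fun c hc => h c (by simp [hc]))]
    · rcases List.mem_cons.mp ha with h' | h'
      · exact absurd h'.symm hb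
      · simp [hb, ih h' (fun c hc => h c (by simp [hc]))]

lemma insertByTS_insertAfter_comm {c m x : ℕ} {t : List ℕ}
    (hc : c ∈ t) (hxc : x ≠ c) (hxm : x < m) :
    insertByTS x (insertAfter c m t) = insertAfter c m (insertByTS x t) := by
  induction t with
  | nil => simp at hc
  | cons b t' ih =>
    by_cases hb : b = c
    · subst hb
      simp only [insertAfter, if_true, insertByTS]
      by_cases hxb : x < b
      · simp [insertByTS, hxb, hxm, insertAfter]
      · simp [insertByTS, hxb, insertAfter, hxc]
    · simp only [insertAfter, if_neg hb, insertByTS]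
      have hc' : c ∈ t' := by
        rcases List.mem_cons.mp hc with h | h
        · exact absurd h.symm hb
        · exact h
      by_cases hxb : x < b
      · simp [insertByTS, hxb, insertAfter, hb, ih hc']
      · simp [insertByTS, hxb, insertAfter, hb, hxc]

lemma replayInsert_insertAfter_comm {a c m x : ℕ} {M : List ℕ}
    (ha : a ∈ M) (hc : c ∈ M) (ham : a ≠ m) (hcx : c ≠ x) (hxm : x < m) :
    replayInsert a x (insertAfter c m M) = insertAfter c m (replayInsert a x M) := by
  induction M with
  | nil => simp at ha
  | cons b t ih =>
    by_cases hb : b = c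
    · subst hb
      simp only [insertAfter, if_true, replayInsert]
      by_cases hba : b = a
      · simp only [if_pos hba]
        rw [insertByTS]
        simp [hxm, insertAfter]
      · have hma : m ≠ a := fun h => ham h.symm
        simp [replayInsert, hba, hma, insertAfter]
    · simp only [insertAfter, if_neg hb, replayInsert]
      have hc' : c ∈ t := by
        rcases List.mem_cons.mp hc with h | h
        · exact absurd h.symm hb
        · exact h
      by_cases hba : b = a
      · simp only [if_pos hba]
        rw [insertByTS_insertAfter_comm hc' (fun h => hcx h.symm) hxm]
        simp [insertAfter, hb]
      · simp only [if_neg hba]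
        have ha' : a ∈ t := by
          rcases List.mem_cons.mp ha with h | h
          · exact absurd h.symm hba
          · exact h
        simp [insertAfter, hb, ih ha' hc']

open List in
lemma sort_insert_max {m : ℕ} {T : Finset ℕ} (hm : m ∉ T)
    (hb : ∀ b ∈ T, b ≤ m) :
    (insert m T).sort (· ≤ ·) = T.sort (· ≤ ·) ++ [m] := by
  have hperm : (insert m T).sort (· ≤ ·) ~ T.sort (· ≤ ·) ++ [m] :=
    calc (insert m T).sort (· ≤ ·) ~ (insert m T).toList := Finset.sort_perm_toList _ _
      _ ~ m :: T.toList := Finset.toList_insert hm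
      _ ~ m :: T.sort (· ≤ ·) := List.Perm.cons m (Finset.sort_perm_toList _ _).symm
      _ ~ T.sort (· ≤ ·) ++ [m] := by
          simpa using (List.perm_append_comm (l₁ := [m]) (l₂ := T.sort (· ≤ ·)))
  have hs2 : (T.sort (· ≤ ·) ++ [m]).Pairwise (· ≤ ·) := by
    refine List.pairwise_append.2 ⟨Finset.pairwise_sort _ _, List.pairwise_singleton _ m, ?_⟩
    intro a haa b hbb
    simp at hbb
    subst hbb
    exact hb a ((Finset.mem_sort _).mp haa)
  exact List.Perm.eq_of_pairwise' (Finset.pairwise_sort _ _) hs2 hperm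

lemma buildSet_insert_max (p : ℕ → ℕ) {m : ℕ} {T : Finset ℕ} (hm : m ∉ T)
    (hb : ∀ b ∈ T, b ≤ m) :
    buildSet p (insert m T) = insertAfter (p m) m (buildSet p T) := by
  unfold buildSet
  rw [sort_insert_max hm hb, List.foldl_append]
  rfl

lemma buildSet_mem (k : ℕ) (p : ℕ → ℕ) (hp : ∀ i, 1 ≤ i → i ≤ k → p i < i) :
    ∀ S : Finset ℕ, S ⊆ Finset.Icc 1 k →
    (∀ i ∈ S, p i = 0 ∨ p i ∈ S) →
    ∀ y, (y ∈ buildSet p S ↔ y = 0 ∨ y ∈ S) := by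
  intro S
  induction S using Finset.strongInduction with
  | _ S ih =>
    intro hS hclosed y
    rcases S.eq_empty_or_nonempty with rfl | hne
    · simp [buildSet]
    · set m := S.max' hne with hmdef
      have hmS : m ∈ S := S.max'_mem hne
      have hmax : ∀ b ∈ S, b ≤ m := fun b hb => S.le_max' b hb
      have hrew : S = insert m (S.erase m) := by
        rw [Finset.insert_erase hmS]
      have hsub : S.erase m ⊂ S := Finset.erase_ssubset hmS
      have hS' : S.erase m ⊆ Finset.Icc 1 k :=
        (Finset.erase_subset _ _).trans hS
      have hclosed' : ∀ i ∈ S.erase m, p i = 0 ∨ p i ∈ S.erase m := by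
        intro i hi
        have hiS := Finset.mem_of_mem_erase hi
        rcases hclosed i hiS with h | h
        · exact Or.inl h
        · right
          refine Finset.mem_erase.mpr ⟨?_, h⟩
          have hik := Finset.mem_Icc.mp (hS hiS)
          have : p i < i := hp i hik.1 hik.2
          exact Nat.ne_of_lt (lt_of_lt_of_le this (hmax i hiS))
      have ih' := ih (S.erase m) hsub hS' hclosed'
      have hmnot : m ∉ S.erase m := Finset.notMem_erase m S
      have hbd : ∀ b ∈ S.erase m, b ≤ m := fun b hb => hmax b (Finset.mem_of_mem_erase hb)
      have hbuild : buildSet p S = insertAfter (p m) m (buildSet p (S.erase m)) := by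
        conv_lhs => rw [hrew]
        exact buildSet_insert_max p hmnot hbd
      have hpm : p m ∈ buildSet p (S.erase m) := by
        rcases hclosed m hmS with h | h
        · rw [h]; exact (ih' 0).mpr (Or.inl rfl)
        · have hmk := Finset.mem_Icc.mp (hS hmS)
          have : p m < m := hp m hmk.1 hmk.2
          exact (ih' (p m)).mpr (Or.inr (Finset.mem_erase.mpr ⟨Nat.ne_of_lt this, h⟩))
      rw [hbuild]
      constructor
      · intro hy
        rcases mem_of_mem_insertAfter hy with h | h
        · right; rw [h]; exact hmS
        · rcases (ih' y).mp h with h | h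
          · exact Or.inl h
          · exact Or.inr (Finset.mem_of_mem_erase h)
      · intro hy
        rcases hy with h | h
        · exact mem_insertAfter_of_mem ((ih' y).mpr (Or.inl h))
        · by_cases hym : y = m
          · rw [hym]; exact self_mem_insertAfter hpm
          · exact mem_insertAfter_of_mem
              ((ih' y).mpr (Or.inr (Finset.mem_erase.mpr ⟨hym, h⟩)))

/-- Replay step lemma: for parent-closed `S` and an event `x ∉ S` whose parent
is already present, the timestamp-guided replay insertion produces exactly the
sequentially built list over `S ∪ {x}`. -/
theorem replay_step
    (k : ℕ) (p : ℕ → ℕ) (hp : ∀ i, 1 ≤ i → i ≤ k → p i < i)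
    (S : Finset ℕ) (hS : S ⊆ Finset.Icc 1 k)
    (hclosed : ∀ i ∈ S, p i = 0 ∨ p i ∈ S)
    (x : ℕ) (hx : x ∈ Finset.Icc 1 k) (hxS : x ∉ S)
    (hpx : p x = 0 ∨ p x ∈ S) :
    replayInsert (p x) x (buildSet p S) = buildSet p (insert x S) := by
  induction S using Finset.strongInduction with
  | _ S ih =>
    have hxk := Finset.mem_Icc.mp hx
    have hpxx : p x < x := hp x hxk.1 hxk.2
    by_cases hbig : ∀ b ∈ S, b < x
    -- x is the maximum of insert x S
    · have hbd : ∀ b ∈ S, b ≤ x := fun b hb => le_of_lt (hbig b hb)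
      rw [buildSet_insert_max p hxS hbd]
      apply replayInsert_eq_insertAfter
      · rcases hpx with h | h
        · rw [h]
          exact (buildSet_mem k p hp S hS hclosed 0).mpr (Or.inl rfl)
        · exact (buildSet_mem k p hp S hS hclosed (p x)).mpr (Or.inr h)
      · intro b hb
        rcases (buildSet_mem k p hp S hS hclosed b).mp hb with h | h
        · rw [h]; exact hxk.1
        · exact hbig b h
    -- there is m ∈ S with x < m; take m = max S
    · push_neg at hbig
      obtain ⟨b₀, hb₀S, hb₀⟩ := hbig
      have hne : S.Nonempty := ⟨b₀, hb₀S⟩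
      set m := S.max' hne with hmdef
      have hmS : m ∈ S := S.max'_mem hne
      have hmax : ∀ b ∈ S, b ≤ m := fun b hb => S.le_max' b hb
      have hxm : x < m :=
        lt_of_le_of_ne (le_trans hb₀ (hmax b₀ hb₀S)) (fun h => hxS (h ▸ hmS))
      have hrew : S = insert m (S.erase m) := (Finset.insert_erase hmS).symm
      have hsub : S.erase m ⊂ S := Finset.erase_ssubset hmS
      have hS' : S.erase m ⊆ Finset.Icc 1 k := (Finset.erase_subset _ _).trans hS
      have hclosed' : ∀ i ∈ S.erase m, p i = 0 ∨ p i ∈ S.erase m := by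
        intro i hi
        have hiS := Finset.mem_of_mem_erase hi
        rcases hclosed i hiS with h | h
        · exact Or.inl h
        · right
          refine Finset.mem_erase.mpr ⟨?_, h⟩
          have hik := Finset.mem_Icc.mp (hS hiS)
          exact Nat.ne_of_lt (lt_of_lt_of_le (hp i hik.1 hik.2) (hmax i hiS))
      have hxS' : x ∉ S.erase m := fun h => hxS (Finset.mem_of_mem_erase h)
      have hpx' : p x = 0 ∨ p x ∈ S.erase m := by
        rcases hpx with h | h
        · exact Or.inl h
        · exact Or.inr (Finset.mem_erase.mpr ⟨Nat.ne_of_lt (lt_trans hpxx hxm), h⟩)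
      have IH := ih (S.erase m) hsub hS' hclosed' hxS' hpx'
      -- rewrite both sides via insertion of the max m
      have hbd : ∀ b ∈ S.erase m, b ≤ m := fun b hb => hmax b (Finset.mem_of_mem_erase hb)
      have hbuildS : buildSet p S = insertAfter (p m) m (buildSet p (S.erase m)) := by
        conv_lhs => rw [hrew]
        exact buildSet_insert_max p (Finset.notMem_erase m S) hbd
      have hmem := buildSet_mem k p hp (S.erase m) hS' hclosed'
      have hmk := Finset.mem_Icc.mp (hS hmS)
      have hpmm : p m < m := hp m hmk.1 hmk.2
      have hpmMem : p m ∈ buildSet p (S.erase m) := by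
        rcases hclosed m hmS with h | h
        · rw [h]; exact (hmem 0).mpr (Or.inl rfl)
        · exact (hmem (p m)).mpr (Or.inr (Finset.mem_erase.mpr ⟨Nat.ne_of_lt hpmm, h⟩))
      have hpxMem : p x ∈ buildSet p (S.erase m) := by
        rcases hpx' with h | h
        · rw [h]; exact (hmem 0).mpr (Or.inl rfl)
        · exact (hmem (p x)).mpr (Or.inr h)
      have hpmx : p m ≠ x := by
        rcases hclosed m hmS with h | h
        · rw [h]; exact Nat.ne_of_lt hxk.1
        · intro hc; exact hxS (hc ▸ h)
      have hRHS : buildSet p (insert x S) =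
          insertAfter (p m) m (buildSet p (insert x (S.erase m))) := by
        have : insert x S = insert m (insert x (S.erase m)) := by
          rw [Finset.insert_comm, Finset.insert_erase hmS]
        rw [this]
        apply buildSet_insert_max
        · simp only [Finset.mem_insert, not_or]
          exact ⟨Ne.symm (Nat.ne_of_lt hxm), Finset.notMem_erase m S⟩
        · intro b hb
          rcases Finset.mem_insert.mp hb with h | h
          · rw [h]; exact le_of_lt hxm
          · exact hbd b h
      rw [hbuildS,
        replayInsert_insertAfter_comm hpxMem hpmMem
          (Nat.ne_of_lt (lt_trans hpxx hxm)) hpmx hxm,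
        IH, hRHS]
end

section
/- Segment invariant: In the final list L k, for every i ∈ {1, …, k}, every element lying strictly between p i (the parent of i) and i in the list order of L k is greater than i. That is, all elements separating a node from its insertion parent in the final list have strictly larger timestamps than the node itself. -/
lemma insertAfter_split (a x : ℕ) : ∀ M : List ℕ, a ∈ M →
    ∃ M1 M2 : List ℕ, M = M1 ++ a :: M2 ∧ insertAfter a x M = M1 ++ a :: x :: M2 := by
  intro M
  induction M with
  | nil => simp
  | cons b t ih =>
    intro h
    by_cases hb : b = a
    · subst hb
      exact ⟨[], t, by simp [insertAfter]⟩
    · have ht : a ∈ t := by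
        rcases List.mem_cons.1 h with h' | h'
        · exact absurd h'.symm hb
        · exact h'
      obtain ⟨M1, M2, h1, h2⟩ := ih ht
      exact ⟨b :: M1, M2, by simp [h1], by simp [insertAfter, hb, h2]⟩

lemma mem_buildL (k : ℕ) (p : ℕ → ℕ) (hp : ∀ i, 1 ≤ i → i ≤ k → p i < i) :
    ∀ n, n ≤ k → ∀ m, m ≤ n → m ∈ buildL p n := by
  intro n
  induction n with
  | zero => intro _ m hm; interval_cases m; simp [buildL]
  | succ n ih =>
    intro hn m hm
    have hpn : p (n + 1) < n + 1 := hp (n + 1) (by omega) hn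
    have hpmem : p (n + 1) ∈ buildL p n := ih (by omega) _ (by omega)
    obtain ⟨M1, M2, h1, h2⟩ := insertAfter_split (p (n + 1)) (n + 1) (buildL p n) hpmem
    show m ∈ insertAfter (p (n + 1)) (n + 1) (buildL p n)
    rw [h2]
    rcases Nat.lt_or_ge m (n + 1) with h | h
    · have : m ∈ buildL p n := ih (by omega) m (by omega)
      rw [h1] at this
      simp only [List.mem_append, List.mem_cons] at this ⊢
      tauto
    · have : m = n + 1 := by omega
      subst this; simp

lemma insert_seg (i pi x : ℕ) (hx : i < x) :
    ∀ u v w L1 L2 : List ℕ, (∀ b ∈ v, i < b) →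
    L1 ++ L2 = u ++ pi :: v ++ i :: w →
    ∃ u' v' w' : List ℕ, L1 ++ x :: L2 = u' ++ pi :: v' ++ i :: w' ∧ ∀ b ∈ v', i < b := by
  intro u v w L1 L2 hv h
  -- note: `u ++ pi :: v ++ i :: w` parses as `(u ++ pi :: v) ++ i :: w`
  rcases List.append_eq_append_iff.1 h with ⟨a', hu, hL2⟩ | ⟨c', hL1, hiw⟩
  · -- u ++ pi :: v = L1 ++ a', L2 = a' ++ i :: w
    rcases List.append_eq_append_iff.1 hu.symm with ⟨b', hub, ha'⟩ | ⟨c'', hL1', hpv⟩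
    · -- u = L1 ++ b', a' = b' ++ pi :: v : insertion inside the `u` region
      exact ⟨L1 ++ x :: b', v, w, by simp [hL2, ha'], hv⟩
    · -- L1 = u ++ c'', pi :: v = c'' ++ a'
      match c'', hpv with
      | [], hpv =>
        -- a' = pi :: v : insertion just before pi
        have ha' : a' = pi :: v := by simpa using hpv.symm
        exact ⟨u ++ [x], v, w, by simp [hL1', hL2, ha'], hv⟩
      | b :: c3, hpv =>
        have hb : b = pi := (List.cons_eq_cons.1 hpv).1.symm
        have hva : v = c3 ++ a' := (List.cons_eq_cons.1 hpv).2
        subst hb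
        -- insertion inside v
        refine ⟨u, c3 ++ x :: a', w, by simp [hL1', hL2], ?_⟩
        intro b hb
        simp only [List.mem_append, List.mem_cons] at hb
        rcases hb with hb | hb | hb
        · exact hv b (by simp [hva, hb])
        · subst hb; exact hx
        · exact hv b (by simp [hva, hb])
  · -- L1 = (u ++ pi :: v) ++ c', i :: w = c' ++ L2
    match c', hiw with
    | [], hiw =>
      -- L2 = i :: w : insertion just before i
      have hL2' : L2 = i :: w := by simpa using hiw.symm
      exact ⟨u, v ++ [x], w, by simp [hL1, hL2'], by
        intro b hb
        simp only [List.mem_append, List.mem_singleton] at hb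
        rcases hb with hb | hb
        · exact hv b hb
        · subst hb; exact hx⟩
    | b :: e, hiw =>
      have hb : b = i := (List.cons_eq_cons.1 hiw.symm).1
      have hw : w = e ++ L2 := (List.cons_eq_cons.1 hiw.symm).2.symm
      subst hb
      exact ⟨u, v, e ++ x :: L2, by simp [hL1, hw], hv⟩

/-- Segment invariant: in the final list `L k`, every element lying strictly
between `p i` and `i` is greater than `i`. -/
theorem segment_invariant
    (k : ℕ) (p : ℕ → ℕ) (hp : ∀ i, 1 ≤ i → i ≤ k → p i < i)
    (i : ℕ) (h1 : 1 ≤ i) (h2 : i ≤ k) :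
    ∃ u v w : List ℕ, buildL p k = u ++ p i :: v ++ i :: w ∧ ∀ b ∈ v, i < b := by
  have key : ∀ n, i ≤ n → n ≤ k →
      ∃ u v w : List ℕ, buildL p n = u ++ p i :: v ++ i :: w ∧ ∀ b ∈ v, i < b := by
    intro n
    induction n with
    | zero => intro h; omega
    | succ n ih =>
      intro hin hnk
      rcases Nat.lt_or_ge n i with h | h
      · -- n + 1 = i
        have : i = n + 1 := by omega
        subst this
        have hpn : p (n + 1) < n + 1 := hp (n + 1) h1 hnk
        have hpmem : p (n + 1) ∈ buildL p n := mem_buildL k p hp n (by omega) _ (by omega)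
        obtain ⟨M1, M2, hM1, hM2⟩ := insertAfter_split (p (n + 1)) (n + 1) (buildL p n) hpmem
        exact ⟨M1, [], M2, by simpa [buildL] using hM2, by simp⟩
      · obtain ⟨u, v, w, hL, hv⟩ := ih h (by omega)
        have hpn : p (n + 1) < n + 1 := hp (n + 1) (by omega) hnk
        have hpmem : p (n + 1) ∈ buildL p n := mem_buildL k p hp n (by omega) _ (by omega)
        obtain ⟨M1, M2, hM1, hM2⟩ := insertAfter_split (p (n + 1)) (n + 1) (buildL p n) hpmem
        have heq : (M1 ++ [p (n + 1)]) ++ M2 = u ++ p i :: v ++ i :: w := by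
          simpa using (hM1 ▸ hL : M1 ++ p (n + 1) :: M2 = u ++ p i :: v ++ i :: w)
        obtain ⟨u', v', w', h1', h2'⟩ :=
          insert_seg i (p i) (n + 1) (by omega) u v w (M1 ++ [p (n + 1)]) M2 hv heq
        refine ⟨u', v', w', ?_, h2'⟩
        have : buildL p (n + 1) = (M1 ++ [p (n + 1)]) ++ (n + 1) :: M2 := by
          simpa [buildL] using hM2
        rw [this]
        exact h1'
  exact key k h2 le_rfl
end

section
/- Replay placement when the successor has a smaller timestamp (paper's Lemma: 'if A→B with A.ts > B.ts, then ReplicateInsertAfter(A,C) must insert C after A but before B'): Let S ⊆ {1, …, k} be parent-closed, let a ∈ S ∪ {0}, and suppose that in build S the element b immediately following a satisfies b < a. Then for every x ∈ {1, …, k} with x ∉ S and p x = a, the element x occurs immediately after a (hence strictly between a and b) in build (S ∪ {x}). -/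
section Aux

open List

lemma insertAfter_not_mem (a x : ℕ) (M : List ℕ) (h : a ∉ M) : insertAfter a x M = M := by
  induction M with
  | nil => rfl
  | cons b t ih =>
    have hb : b ≠ a := fun e => h (e ▸ (List.mem_cons_self (a := b) (l := t)))
    simp only [insertAfter, if_neg hb]
    rw [ih (fun e => h (List.mem_cons_of_mem _ e))]

lemma insertAfter_perm (a x : ℕ) (M : List ℕ) (h : a ∈ M) :
    List.Perm (insertAfter a x M) (x :: M) := by
  induction M with
  | nil => exact absurd h ((List.not_mem_nil (a := a)))
  | cons b t ih =>
    by_cases hb : b = a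
    · simp only [insertAfter, if_pos hb]
      exact List.Perm.swap x b t
    · have ht : a ∈ t := by
        rcases List.mem_cons.1 h with h' | h'
        · exact absurd h'.symm hb
        · exact h'
      simp only [insertAfter, if_neg hb]
      exact ((ih ht).cons b).trans (List.Perm.swap x b t)

lemma insertAfter_split_s6 (a x : ℕ) (v : List ℕ) (u : List ℕ) (h : a ∉ u) :
    insertAfter a x (u ++ a :: v) = u ++ a :: x :: v := by
  induction u with
  | nil => simp [insertAfter]
  | cons b u ih =>
    have hb : b ≠ a := fun e => h (e ▸ (List.mem_cons_self (a := b) (l := u)))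
    have : (b :: u) ++ a :: v = b :: (u ++ a :: v) := rfl
    rw [this, show insertAfter a x (b :: (u ++ a :: v))
        = b :: insertAfter a x (u ++ a :: v) by simp [insertAfter, hb]]
    rw [ih (fun e => h (List.mem_cons_of_mem _ e))]
    rfl

lemma insertAfter_adj (a c d j : ℕ) (hd : d ≠ a) (u v : List ℕ) :
    ∃ u' v', insertAfter d j (u ++ a :: c :: v) = u' ++ a :: c :: v' := by
  induction u with
  | nil =>
    by_cases hc : c = d
    · exact ⟨[], j :: v, by simp [insertAfter, hd.symm, hc]⟩
    · exact ⟨[], insertAfter d j v, by simp [insertAfter, hd.symm, hc]⟩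
  | cons b u ih =>
    by_cases hb : b = d
    · exact ⟨b :: j :: u, v, by simp [insertAfter, hb]⟩
    · obtain ⟨u', v', h⟩ := ih
      refine ⟨b :: u', v', ?_⟩
      have : (b :: u) ++ a :: c :: v = b :: (u ++ a :: c :: v) := rfl
      rw [this, show insertAfter d j (b :: (u ++ a :: c :: v))
          = b :: insertAfter d j (u ++ a :: c :: v) by simp [insertAfter, hb], h]
      rfl

lemma insertAfter_comm (a c x j : ℕ) (hca : c ≠ a) (hcx : c ≠ x) (hja : j ≠ a)
    (M : List ℕ) :
    insertAfter c j (insertAfter a x M) = insertAfter a x (insertAfter c j M) := by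
  induction M with
  | nil => rfl
  | cons b t ih =>
    by_cases hba : b = a
    · subst hba
      simp [insertAfter, hca.symm, hcx.symm, hja, Ne.symm hca]
    · by_cases hbc : b = c
      · subst hbc
        simp [insertAfter, hba, hja]
      · simp [insertAfter, hba, hbc, ih]

lemma split_unique (a : ℕ) :
    ∀ (u u' r r' : List ℕ), u ++ a :: r = u' ++ a :: r' → a ∉ u → a ∉ u' →
      u = u' ∧ r = r'
  | [], [], r, r', h, _, _ => by simpa using h
  | [], b :: u', r, r', h, _, h2 => by
    simp only [List.nil_append, List.cons_append, List.cons.injEq] at h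
    exact absurd (h.1 ▸ (List.mem_cons_self (a := b) (l := u'))) (by simpa [← h.1] using h2)
  | b :: u, [], r, r', h, h1, _ => by
    simp only [List.nil_append, List.cons_append, List.cons.injEq] at h
    exact absurd (h.1 ▸ (List.mem_cons_self (a := b) (l := u))) (by simpa [h.1] using h1)
  | b :: u, b' :: u', r, r', h, h1, h2 => by
    simp only [List.cons_append, List.cons.injEq] at h
    obtain ⟨h3, h4⟩ := split_unique a u u' r r' h.2
      (fun e => h1 (List.mem_cons_of_mem _ e)) (fun e => h2 (List.mem_cons_of_mem _ e))
    exact ⟨by rw [h.1, h3], h4⟩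

lemma not_mem_of_nodup_split {a : ℕ} {u r : List ℕ} (h : (u ++ a :: r).Nodup) :
    a ∉ u := by
  rw [List.nodup_append] at h
  exact fun hm => h.2.2 a hm a (List.mem_cons_self (a := a) (l := r)) rfl

lemma sorted_dropWhile_ge (x : ℕ) (l : List ℕ) (hs : l.Pairwise (· ≤ ·)) :
    ∀ j ∈ l.dropWhile (fun j => decide (j < x)), x ≤ j := by
  induction l with
  | nil => simp
  | cons c t ih =>
    intro j hj
    by_cases hc : c < x
    · rw [List.dropWhile_cons_of_pos (by simpa using hc)] at hj
      exact ih (List.pairwise_cons.1 hs).2 j hj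
    · rw [List.dropWhile_cons_of_neg (by simpa using hc)] at hj
      rcases List.mem_cons.1 hj with e | e
      · omega
      · have := (List.pairwise_cons.1 hs).1 j e
        omega

variable (p : ℕ → ℕ)

lemma comm_fold (a x : ℕ) (l : List ℕ) (h : ∀ j ∈ l, p j ≠ a ∧ p j ≠ x ∧ j ≠ a) :
    ∀ M : List ℕ,
      l.foldl (fun M i => insertAfter (p i) i M) (insertAfter a x M) =
        insertAfter a x (l.foldl (fun M i => insertAfter (p i) i M) M) := by
  induction l with
  | nil => intro M; rfl
  | cons j t ih =>
    intro M
    obtain ⟨h1, h2, h3⟩ := h j ((List.mem_cons_self (a := j) (l := t)))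
    simp only [List.foldl_cons]
    rw [insertAfter_comm a (p j) x j h1 h2 h3 M,
      ih (fun i hi => h i (List.mem_cons_of_mem _ hi))]

lemma fold_pres (a c : ℕ) (l : List ℕ) (h : ∀ j ∈ l, p j ≠ a) :
    ∀ (u v : List ℕ),
      ∃ u' v', l.foldl (fun M i => insertAfter (p i) i M) (u ++ a :: c :: v) =
        u' ++ a :: c :: v' := by
  induction l with
  | nil => intro u v; exact ⟨u, v, rfl⟩
  | cons j t ih =>
    intro u v
    obtain ⟨u1, v1, h1⟩ := insertAfter_adj a c (p j) j (h j ((List.mem_cons_self (a := j) (l := t)))) u v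
    obtain ⟨u', v', h2⟩ := ih (fun i hi => h i (List.mem_cons_of_mem _ hi)) u1 v1
    refine ⟨u', v', ?_⟩
    simp only [List.foldl_cons]
    rw [h1, h2]

lemma build_inv :
    ∀ (l : List ℕ) (M : List ℕ) (E : Finset ℕ), M.Nodup → (∀ y, y ∈ M ↔ y ∈ E) →
      l.Pairwise (· < ·) → (∀ i ∈ l, i ∉ E) →
      (∀ i ∈ l, p i ∈ E ∨ (p i ∈ l ∧ p i < i)) →
      (l.foldl (fun M i => insertAfter (p i) i M) M).Nodup ∧
      (∀ y, y ∈ l.foldl (fun M i => insertAfter (p i) i M) M ↔ y ∈ E ∨ y ∈ l) ∧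
      (∀ a, (∃ j ∈ l, p j = a ∧ a < j) →
        ∃ c u' v', a < c ∧
          l.foldl (fun M i => insertAfter (p i) i M) M = u' ++ a :: c :: v')
  | [], M, E, hnd, hmem, _, _, _ => by
    refine ⟨hnd, by simpa using hmem, ?_⟩
    rintro a ⟨j, hj, -⟩
    exact absurd hj ((List.not_mem_nil (a := j)))
  | i :: t, M, E, hnd, hmem, hsort, hnew, hpar => by
    have hti : ∀ j ∈ t, i < j := fun j hj => (List.pairwise_cons.1 hsort).1 j hj
    have hpiM : p i ∈ M := by
      rcases hpar i ((List.mem_cons_self (a := i) (l := t))) with h | ⟨h1, h2⟩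
      · exact (hmem _).2 h
      · rcases List.mem_cons.1 h1 with e | e
        · omega
        · exact absurd h2 (by have := hti _ e; omega)
    have hperm := insertAfter_perm (p i) i M hpiM
    have hiM : i ∉ M := fun h => hnew i ((List.mem_cons_self (a := i) (l := t))) ((hmem _).1 h)
    have hnd1 : (insertAfter (p i) i M).Nodup :=
      hperm.nodup_iff.2 (List.nodup_cons.2 ⟨hiM, hnd⟩)
    have hmem1 : ∀ y, y ∈ insertAfter (p i) i M ↔ y ∈ insert i E := by
      intro y
      rw [hperm.mem_iff, List.mem_cons, Finset.mem_insert, hmem]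
    obtain ⟨H1, H2, H3⟩ := build_inv t (insertAfter (p i) i M) (insert i E) hnd1 hmem1
      (List.pairwise_cons.1 hsort).2
      (fun j hj => by
        simp only [Finset.mem_insert, not_or]
        exact ⟨by have := hti j hj; omega, hnew j (List.mem_cons_of_mem _ hj)⟩)
      (fun j hj => by
        rcases hpar j (List.mem_cons_of_mem _ hj) with h | ⟨h1, h2⟩
        · exact Or.inl (Finset.mem_insert_of_mem h)
        · rcases List.mem_cons.1 h1 with e | e
          · exact Or.inl (e ▸ Finset.mem_insert_self i E)
          · exact Or.inr ⟨e, h2⟩)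
    simp only [List.foldl_cons]
    refine ⟨H1, ?_, ?_⟩
    · intro y
      rw [H2 y, Finset.mem_insert, List.mem_cons]
      tauto
    · rintro a ⟨j, hj, hja, haj⟩
      by_cases hta : ∃ j ∈ t, p j = a ∧ a < j
      · exact H3 a hta
      · push_neg at hta
        have hji : j = i := by
          rcases List.mem_cons.1 hj with e | e
          · exact e
          · exact absurd haj (by simpa [hja] using hta j e)
        subst hji
        have haM : a ∈ M := hja ▸ hpiM
        obtain ⟨u0, v0, hsp⟩ := List.append_of_mem haM
        have hau0 : a ∉ u0 := not_mem_of_nodup_split (hsp ▸ hnd)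
        have hstep : insertAfter (p j) j M = u0 ++ a :: j :: v0 := by
          rw [hja, hsp, insertAfter_split_s6 a j v0 u0 hau0]
        have htne : ∀ j' ∈ t, p j' ≠ a := by
          intro j' hj' he
          exact absurd (hti j' hj') (by have := hta j' hj'; omega)
        obtain ⟨u', v', hfin⟩ := fold_pres p a j t htne u0 v0
        exact ⟨j, u', v', haj, by rw [hstep]; exact hfin⟩

end Aux

/-- Replay placement when the successor has a smaller timestamp: if in
`build S` the element `b` immediately following `a` satisfies `b < a`, then
inserting an event `x ∉ S` with parent `a` places `x` immediately after `a`
(hence strictly between `a` and `b`) in `build (S ∪ {x})`. -/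

theorem replay_placement_smaller_successor
    (k : ℕ) (p : ℕ → ℕ) (hp : ∀ i, 1 ≤ i → i ≤ k → p i < i)
    (S : Finset ℕ) (hS : S ⊆ Finset.Icc 1 k)
    (hclosed : ∀ i ∈ S, p i = 0 ∨ p i ∈ S)
    (a b : ℕ) (ha : a = 0 ∨ a ∈ S)
    (u v : List ℕ) (hsplit : buildSet p S = u ++ a :: b :: v) (hba : b < a)
    (x : ℕ) (hx : x ∈ Finset.Icc 1 k) (hxS : x ∉ S) (hpx : p x = a) :
    buildSet p (insert x S) = u ++ a :: x :: b :: v := by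
  have hx1 : 1 ≤ x := (Finset.mem_Icc.1 hx).1
  have hxk : x ≤ k := (Finset.mem_Icc.1 hx).2
  have hax : a < x := hpx ▸ hp x hx1 hxk
  set sortS := S.sort (· ≤ ·) with hsortS
  have hmemS : ∀ j, j ∈ sortS ↔ j ∈ S := fun j => Finset.mem_sort _
  -- invariant conditions for S
  have hicc : ∀ j ∈ S, 1 ≤ j ∧ j ≤ k := fun j hj => Finset.mem_Icc.1 (hS hj)
  obtain ⟨hnd, hmem, hadj⟩ := build_inv p sortS [0] {0} (List.nodup_cons.2 (by simp))
    (by simp) (List.sortedLT_iff_pairwise.1 (Finset.sortedLT_sort S))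
    (fun i hi => by
      have := (hicc i ((hmemS i).1 hi)).1; simp; omega)
    (fun i hi => by
      have hiS := (hmemS i).1 hi
      rcases hclosed i hiS with h | h
      · exact Or.inl (by simp [h])
      · exact Or.inr ⟨(hmemS _).2 h, hp i (hicc i hiS).1 (hicc i hiS).2⟩)
  have hndB : (buildSet p S).Nodup := hnd
  -- no children of a in S
  have hnc : ∀ j ∈ S, p j ≠ a := by
    intro j hj he
    have hja : a < j := he ▸ hp j (hicc j hj).1 (hicc j hj).2
    obtain ⟨c, u', v', hac, hB⟩ := hadj a ⟨j, (hmemS j).2 hj, he, hja⟩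
    have hB' : u ++ a :: b :: v = u' ++ a :: c :: v' := by
      rw [← hB, ← hsplit]; rfl
    have hndB' := hsplit ▸ hndB
    have hau : a ∉ u := not_mem_of_nodup_split hndB'
    have hau' : a ∉ u' := not_mem_of_nodup_split (hB' ▸ hndB')
    obtain ⟨-, h2⟩ := split_unique a u u' (b :: v) (c :: v') hB' hau hau'
    have : b = c := (List.cons.injEq _ _ _ _ ▸ h2).1
    omega
  -- split the sorted list of (insert x S)
  set l1 := sortS.takeWhile (fun j => decide (j < x)) with hl1
  set l2 := sortS.dropWhile (fun j => decide (j < x)) with hl2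
  have hsplit12 : l1 ++ l2 = sortS := List.takeWhile_append_dropWhile ..
  have hl1mem : ∀ j ∈ l1, j < x := fun j hj => by
    simpa using List.mem_takeWhile_imp hj
  have hl2S : ∀ j ∈ l2, j ∈ S := fun j hj =>
    (hmemS j).1 ((List.dropWhile_sublist _).mem hj)
  have hl2mem : ∀ j ∈ l2, x ≤ j := sorted_dropWhile_ge x sortS (Finset.pairwise_sort (s := S) (r := (· ≤ ·)))
  have hperm1 : List.Perm ((insert x S).sort (· ≤ ·)) (x :: sortS) :=
    (Finset.sort_perm_toList _ _).trans ((Finset.toList_insert hxS).trans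
      (List.Perm.cons x (Finset.sort_perm_toList _ _).symm))
  have hsortIns : (insert x S).sort (· ≤ ·) = l1 ++ x :: l2 := by
    refine (fun h1 h2 => List.Perm.eq_of_pairwise' (Finset.pairwise_sort (s := insert x S) (r := (· ≤ ·))) h2 h1) ?_ ?_
    · exact hperm1.trans (by rw [← hsplit12]; exact List.perm_middle.symm)
    · rw [List.pairwise_append]
      refine ⟨(Finset.pairwise_sort (s := S) (r := (· ≤ ·))).sublist (List.takeWhile_sublist _), ?_, ?_⟩
      · exact List.pairwise_cons.2
          ⟨hl2mem, (Finset.pairwise_sort (s := S) (r := (· ≤ ·))).sublist (List.dropWhile_sublist _)⟩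
      · intro c hc d hd
        rcases List.mem_cons.1 hd with e | e
        · have := hl1mem c hc; omega
        · have := hl1mem c hc; have := hl2mem d e; omega
  -- compute
  have hcond : ∀ j ∈ l2, p j ≠ a ∧ p j ≠ x ∧ j ≠ a := by
    intro j hj
    have hjS := hl2S j hj
    have hjx := hl2mem j hj
    refine ⟨hnc j hjS, ?_, by omega⟩
    rcases hclosed j hjS with h | h
    · omega
    · exact fun e => hxS (e ▸ h)
  have : buildSet p (insert x S) =
      insertAfter a x (buildSet p S) := by
    show ((insert x S).sort (· ≤ ·)).foldl (fun M i => insertAfter (p i) i M) [0] = _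
    rw [hsortIns, List.foldl_append, List.foldl_cons, hpx,
      comm_fold p a x l2 hcond, ← List.foldl_append, hsplit12]
    rfl
  rw [this, hsplit]
  have hau : a ∉ u := not_mem_of_nodup_split (hsplit ▸ hndB)
  exact insertAfter_split_s6 a x (b :: v) u hau
end

section
/- Parents precede children in list order (underlying the paper's Lemma that a ReplicateInsertAfter(A,C) message implies A.ts < C.ts, together with the fact that InsertAfter only inserts to the right): For every i ∈ {1, …, k}, the parent p i occurs strictly before i in the final list L k (and more generally in every L m with m ≥ i). -/
lemma sublist_insertAfter (a x : ℕ) (L : List ℕ) : L.Sublist (insertAfter a x L) := by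
  induction L with
  | nil => simp [insertAfter]
  | cons b t ih =>
    simp only [insertAfter]
    split
    · exact .cons₂ b (.cons x (List.Sublist.refl t))
    · exact .cons₂ b ih

lemma pair_sublist_insertAfter {a : ℕ} (x : ℕ) {L : List ℕ} (h : a ∈ L) :
    List.Sublist [a, x] (insertAfter a x L) := by
  induction L with
  | nil => simp at h
  | cons b t ih =>
    simp only [insertAfter]
    split
    · exact ‹b = a› ▸ .cons₂ b (.cons₂ x (List.nil_sublist t))
    · rcases List.mem_cons.1 h with h | h
      · exact absurd h.symm ‹¬ b = a›
      · exact .cons b (ih h)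

lemma mem_insertAfter {y a x : ℕ} {L : List ℕ} (h : y ∈ insertAfter a x L) :
    y ∈ L ∨ y = x := by
  induction L with
  | nil => simp [insertAfter] at h
  | cons b t ih =>
    simp only [insertAfter] at h
    split at h
    · simp only [List.mem_cons] at h ⊢
      tauto
    · rcases List.mem_cons.1 h with h | h
      · simp [h]
      · rcases ih h with h | h <;> simp [h]

lemma nodup_insertAfter {a x : ℕ} {L : List ℕ} (h : L.Nodup) (hx : x ∉ L) :
    (insertAfter a x L).Nodup := by
  induction L with
  | nil => simp [insertAfter]
  | cons b t ih =>
    simp only [insertAfter]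
    rcases List.nodup_cons.1 h with ⟨hb, ht⟩
    split
    · refine List.nodup_cons.2 ⟨?_, List.nodup_cons.2 ⟨fun hc => hx (by simp [hc]), ht⟩⟩
      simp only [List.mem_cons]
      push_neg
      exact ⟨fun hc => hx (by simp [hc.symm]), hb⟩
    · refine List.nodup_cons.2 ⟨fun hc => ?_, ih ht (fun hc => hx (by simp [hc]))⟩
      rcases mem_insertAfter hc with hc | hc
      · exact hb hc
      · exact hx (by simp [hc.symm])

lemma buildL_le {p : ℕ → ℕ} {n j : ℕ} (h : j ∈ buildL p n) : j ≤ n := by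
  induction n with
  | zero => simp [buildL] at h; simp [h]
  | succ n ih =>
    rcases mem_insertAfter h with h | h
    · exact (ih h).trans (Nat.le_succ n)
    · exact h.le

lemma buildL_nodup (p : ℕ → ℕ) (n : ℕ) : (buildL p n).Nodup := by
  induction n with
  | zero => simp [buildL]
  | succ n ih =>
    exact nodup_insertAfter ih (fun h => by have := buildL_le h; omega)

lemma buildL_mem {k : ℕ} {p : ℕ → ℕ} (hp : ∀ i, 1 ≤ i → i ≤ k → p i < i) :
    ∀ n, n ≤ k → ∀ j, j ≤ n → j ∈ buildL p n := by
  intro n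
  induction n with
  | zero => intro _ j hj; interval_cases j; simp [buildL]
  | succ n ih =>
    intro hn j hj
    rcases Nat.lt_or_ge j (n+1) with h | h
    · exact (sublist_insertAfter _ _ _).mem (ih (by omega) j (by omega))
    · have hj' : j = n + 1 := by omega
      subst hj'
      have hpm : p (n+1) ∈ buildL p n :=
        ih (by omega) _ (by have := hp (n+1) (by omega) hn; omega)
      exact (pair_sublist_insertAfter (n+1) hpm).mem (by simp)

lemma buildL_sublist (p : ℕ → ℕ) {i m : ℕ} (h : i ≤ m) :
    List.Sublist (buildL p i) (buildL p m) := by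
  induction m with
  | zero => simp_all
  | succ m ih =>
    rcases Nat.lt_or_ge i (m+1) with h' | h'
    · exact (ih (by omega)).trans (sublist_insertAfter _ _ _)
    · have : i = m + 1 := by omega
      subst this; exact List.Sublist.refl _

lemma indexOf_lt_of_pair_sublist {a b : ℕ} {L : List ℕ}
    (h : List.Sublist [a, b] L) (hn : L.Nodup) : L.idxOf a < L.idxOf b := by
  induction L with
  | nil => simp at h
  | cons c t ih =>
    rcases List.nodup_cons.1 hn with ⟨hc, ht⟩
    cases h with
    | cons _ h =>
      have ha : a ∈ t := h.mem (by simp)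
      have hb : b ∈ t := h.mem (by simp)
      have hca : c ≠ a := fun e => hc (e ▸ ha)
      have hcb : c ≠ b := fun e => hc (e ▸ hb)
      rw [List.idxOf_cons_ne _ hca, List.idxOf_cons_ne _ hcb]
      exact Nat.succ_lt_succ (ih h ht)
    | cons_cons _ h =>
      have hb : b ∈ t := h.mem (by simp)
      have hcb : a ≠ b := fun e => hc (e ▸ hb)
      rw [List.idxOf_cons_self, List.idxOf_cons_ne _ hcb]
      exact Nat.succ_pos _


/-- Parents precede children in list order: for every `i ∈ {1, …, k}`, the
parent `p i` occurs strictly before `i` in every `L m` with `i ≤ m ≤ k`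
(in particular in the final list `L k`). -/
theorem parent_precedes
    (k : ℕ) (p : ℕ → ℕ) (hp : ∀ i, 1 ≤ i → i ≤ k → p i < i)
    (i : ℕ) (h1 : 1 ≤ i) (h2 : i ≤ k)
    (m : ℕ) (hm1 : i ≤ m) (hm2 : m ≤ k) :
    (buildL p m).idxOf (p i) < (buildL p m).idxOf i := by
  obtain ⟨j, rfl⟩ : ∃ j, i = j + 1 := ⟨i - 1, by omega⟩
  have hpm : p (j+1) ∈ buildL p j :=
    buildL_mem hp j (by omega) _ (by have := hp (j+1) h1 h2; omega)
  have hpair : List.Sublist [p (j+1), j+1] (buildL p (j+1)) :=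
    pair_sublist_insertAfter (j+1) hpm
  have hsub : List.Sublist [p (j+1), j+1] (buildL p m) :=
    hpair.trans (buildL_sublist p hm1)
  exact indexOf_lt_of_pair_sublist hsub (buildL_nodup p m)
end

section
/- Preorder-traversal characterization of the built list: Regard the parent map p as defining a rooted tree on {0, 1, …, k} with root 0 (the parent of node i being p i). Then the final list L k equals the depth-first preorder traversal of this tree in which the children of each node are visited in decreasing order of timestamp. In particular, each node of the tree is followed in L k by a contiguous block consisting exactly of its proper descendants. -/
/-- Depth-first preorder traversal of the parent tree on `{0, 1, …, k}` rooted
at `0`, visiting the children of each node in decreasing order of timestamp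
(`fuel` bounds the recursion depth; depth is at most `k`). -/
def preorderAux (p : ℕ → ℕ) (k : ℕ) : ℕ → ℕ → List ℕ
  | 0, n => [n]
  | fuel + 1, n =>
      n :: (((List.range (k + 1)).filter
            (fun i => decide (1 ≤ i) && decide (p i = n))).reverse).flatMap
          (fun c => preorderAux p k fuel c)



section TRhelpers

/-- extended parent map -/
def qf (p : ℕ → ℕ) (m : ℕ) : ℕ := if m = 0 then 0 else p m

/-- children of `n`, in decreasing order -/
def kids (p : ℕ → ℕ) (k n : ℕ) : List ℕ :=
  ((List.range (k + 1)).filter (fun i => decide (1 ≤ i) && decide (p i = n))).reverse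

theorem preorderAux_succ (p : ℕ → ℕ) (k fuel n : ℕ) :
    preorderAux p k (fuel + 1) n = n :: (kids p k n).flatMap (preorderAux p k fuel) := rfl

theorem mem_kids {p : ℕ → ℕ} {k n c : ℕ} :
    c ∈ kids p k n ↔ 1 ≤ c ∧ c ≤ k ∧ p c = n := by
  simp [kids, List.mem_filter, Nat.lt_succ_iff]
  tauto

theorem kids_nodup (p : ℕ → ℕ) (k n : ℕ) : (kids p k n).Nodup := by
  simp only [kids, List.nodup_reverse]
  exact List.nodup_range.filter _

theorem qf_le {p : ℕ → ℕ} {m : ℕ} (hp : ∀ i, 1 ≤ i → i ≤ m → p i < i) {x : ℕ} (hx : x ≤ m) :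
    qf p x ≤ x := by
  unfold qf
  split
  · omega
  · exact le_of_lt (hp x (by omega) hx)

theorem iter_le {p : ℕ → ℕ} {m : ℕ} (hp : ∀ i, 1 ≤ i → i ≤ m → p i < i) (r : ℕ) {x : ℕ}
    (hx : x ≤ m) : (qf p)^[r] x ≤ x := by
  induction r with
  | zero => simp
  | succ r ih =>
    rw [Function.iterate_succ_apply']
    exact le_trans (qf_le hp (le_trans ih hx)) ih

theorem insertAfter_of_not_mem {a : ℕ} (x : ℕ) {l : List ℕ} (h : a ∉ l) :
    insertAfter a x l = l := by
  induction l with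
  | nil => rfl
  | cons b t ih =>
    simp only [List.mem_cons, not_or] at h
    simp only [insertAfter, if_neg (Ne.symm h.1)]
    rw [ih h.2]

theorem insertAfter_append_left {a : ℕ} (x : ℕ) {l₁ : List ℕ} (l₂ : List ℕ) (h : a ∈ l₁) :
    insertAfter a x (l₁ ++ l₂) = insertAfter a x l₁ ++ l₂ := by
  induction l₁ with
  | nil => simp at h
  | cons b t ih =>
    by_cases hb : b = a
    · simp [insertAfter, hb]
    · rcases List.mem_cons.1 h with rfl | h
      · exact absurd rfl hb
      · simp [insertAfter, hb, ih h]

theorem insertAfter_append_right {a : ℕ} (x : ℕ) {l₁ : List ℕ} (l₂ : List ℕ) (h : a ∉ l₁) :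
    insertAfter a x (l₁ ++ l₂) = l₁ ++ insertAfter a x l₂ := by
  induction l₁ with
  | nil => rfl
  | cons b t ih =>
    simp only [List.mem_cons, not_or] at h
    simp [insertAfter, if_neg (Ne.symm h.1), ih h.2]

theorem flatMap_congr' {l : List ℕ} {f g : ℕ → List ℕ} (h : ∀ a ∈ l, f a = g a) :
    l.flatMap f = l.flatMap g := by
  induction l with
  | nil => rfl
  | cons b t ih => simp_all [List.flatMap_cons]

theorem pre_head (p : ℕ → ℕ) (k fuel n : ℕ) : ∃ v, preorderAux p k fuel n = n :: v := by
  cases fuel with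
  | zero => exact ⟨[], rfl⟩
  | succ f => exact ⟨_, rfl⟩

theorem mem_pre_self (p : ℕ → ℕ) (k fuel n : ℕ) : n ∈ preorderAux p k fuel n := by
  obtain ⟨v, hv⟩ := pre_head p k fuel n
  rw [hv]; exact List.mem_cons_self

/-- forward membership: everything in the subtree list is a `≤ m` descendant -/
theorem mem_pre_mp {p : ℕ → ℕ} {m : ℕ} (hp : ∀ i, 1 ≤ i → i ≤ m → p i < i) :
    ∀ fuel n j, n ≤ m → j ∈ preorderAux p m fuel n → j ≤ m ∧ ∃ r, (qf p)^[r] j = n := by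
  intro fuel
  induction fuel with
  | zero =>
    intro n j hn hj
    simp only [preorderAux, List.mem_singleton] at hj
    subst hj; exact ⟨hn, 0, rfl⟩
  | succ f ih =>
    intro n j hn hj
    rw [preorderAux_succ] at hj
    rcases List.mem_cons.1 hj with rfl | hj
    · exact ⟨hn, 0, rfl⟩
    · rcases List.mem_flatMap.1 hj with ⟨c, hc, hjc⟩
      obtain ⟨h1, h2, h3⟩ := mem_kids.1 hc
      obtain ⟨hjm, r, hr⟩ := ih c j h2 hjc
      refine ⟨hjm, r + 1, ?_⟩
      rw [Function.iterate_succ_apply', hr]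
      unfold qf
      rw [if_neg (by omega)]
      exact h3

/-- elements of a subtree are `≥` its root -/
theorem mem_pre_ge {p : ℕ → ℕ} {m : ℕ} (hp : ∀ i, 1 ≤ i → i ≤ m → p i < i)
    {fuel n j : ℕ} (hn : n ≤ m) (hj : j ∈ preorderAux p m fuel n) : n ≤ j := by
  obtain ⟨hjm, r, hr⟩ := mem_pre_mp hp fuel n j hn hj
  exact hr ▸ iter_le hp r hjm

/-- reverse membership -/
theorem mem_pre_mpr {p : ℕ → ℕ} {m : ℕ} (hp : ∀ i, 1 ≤ i → i ≤ m → p i < i) :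
    ∀ r fuel n j, n ≤ m → m - n ≤ fuel → j ≤ m → (qf p)^[r] j = n →
      j ∈ preorderAux p m fuel n := by
  intro r
  induction r using Nat.strong_induction_on with
  | _ r ih =>
    intro fuel n j hn hfuel hj hr
    by_cases hjn : j = n
    · subst hjn; exact mem_pre_self p m fuel j
    · cases r with
      | zero => exact absurd hr hjn
      | succ s =>
        rw [Function.iterate_succ_apply'] at hr
        by_cases hcn : (qf p)^[s] j = n
        · exact ih s (Nat.lt_succ_self s) fuel n j hn hfuel hj hcn
        · set c := (qf p)^[s] j with hc
          have hc0 : c ≠ 0 := by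
            intro h0
            rw [h0] at hr
            simp [qf] at hr
            exact hcn (by rw [h0, ← hr])
          have hcm : c ≤ m := le_trans (iter_le hp s hj) hj
          have hpc : p c = n := by unfold qf at hr; rwa [if_neg hc0] at hr
          have hnc : n < c := hpc ▸ hp c (by omega) hcm
          obtain ⟨f, rfl⟩ : ∃ f, fuel = f + 1 := ⟨fuel - 1, by omega⟩
          rw [preorderAux_succ]
          refine List.mem_cons_of_mem _ (List.mem_flatMap.2 ⟨c, mem_kids.2 ⟨by omega, hcm, hpc⟩, ?_⟩)
          exact ih s (Nat.lt_succ_self s) f c j hcm (by omega) hj hc.symm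

theorem mem_pre {p : ℕ → ℕ} {m : ℕ} (hp : ∀ i, 1 ≤ i → i ≤ m → p i < i)
    (fuel n j : ℕ) (hn : n ≤ m) (hf : m - n ≤ fuel) :
    j ∈ preorderAux p m fuel n ↔ j ≤ m ∧ ∃ r, (qf p)^[r] j = n := by
  constructor
  · exact mem_pre_mp hp fuel n j hn
  · rintro ⟨hjm, r, hr⟩
    exact mem_pre_mpr hp r fuel n j hn hf hjm hr

/-- fuel stability, successor form -/
theorem pre_stab_succ {p : ℕ → ℕ} {m : ℕ} (hp : ∀ i, 1 ≤ i → i ≤ m → p i < i) :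
    ∀ f n, n ≤ m → m - n ≤ f → preorderAux p m (f + 1) n = preorderAux p m f n := by
  intro f
  induction f with
  | zero =>
    intro n hn hf
    have hnm : n = m := by omega
    subst hnm
    rw [preorderAux_succ]
    have hk : kids p n n = [] := by
      rw [List.eq_nil_iff_forall_not_mem]
      intro c hc
      obtain ⟨h1, h2, h3⟩ := mem_kids.1 hc
      have := hp c h1 h2
      omega
    simp [hk, preorderAux]
  | succ f ih =>
    intro n hn hf
    rw [preorderAux_succ, preorderAux_succ]
    congr 1
    apply flatMap_congr'
    intro c hc
    obtain ⟨h1, h2, h3⟩ := mem_kids.1 hc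
    have hnc : n < c := h3 ▸ hp c h1 h2
    exact ih c h2 (by omega)

theorem pre_stab_add {p : ℕ → ℕ} {m : ℕ} (hp : ∀ i, 1 ≤ i → i ≤ m → p i < i) :
    ∀ d f n, n ≤ m → m - n ≤ f → preorderAux p m (f + d) n = preorderAux p m f n := by
  intro d
  induction d with
  | zero => intro f n _ _; rfl
  | succ d ih =>
    intro f n hn hf
    have : f + (d + 1) = (f + d) + 1 := by omega
    rw [this, pre_stab_succ hp (f + d) n hn (by omega), ih f n hn hf]

theorem pre_stab {p : ℕ → ℕ} {m : ℕ} (hp : ∀ i, 1 ≤ i → i ≤ m → p i < i)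
    (f₁ f₂ n : ℕ) (hn : n ≤ m) (h₁ : m - n ≤ f₁) (h₂ : m - n ≤ f₂) :
    preorderAux p m f₁ n = preorderAux p m f₂ n := by
  have e₁ : (m - n) + (f₁ - (m - n)) = f₁ := by omega
  have e₂ : (m - n) + (f₂ - (m - n)) = f₂ := by omega
  rw [← e₁, ← e₂, pre_stab_add hp _ _ n hn le_rfl, pre_stab_add hp _ _ n hn le_rfl]

/-- ancestors of a node with the same parent coincide -/
theorem chain_unique_aux {p : ℕ → ℕ} {m : ℕ} (hp : ∀ i, 1 ≤ i → i ≤ m → p i < i)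
    {a c c' n s t : ℕ} (ha : a ≤ m) (hcm : c ≤ m)
    (hs : (qf p)^[s] a = c) (ht : (qf p)^[t] a = c')
    (hqc : qf p c = n) (hnc : n < c) (hnc' : n < c') (hst : s ≤ t) : c = c' := by
  obtain ⟨d, rfl⟩ := Nat.exists_eq_add_of_le hst
  rw [Nat.add_comm, Function.iterate_add_apply, hs] at ht
  cases d with
  | zero => exact ht
  | succ e =>
    exfalso
    rw [Function.iterate_succ_apply, hqc] at ht
    have : (qf p)^[e] n ≤ n := iter_le hp e (by omega)
    omega

theorem chain_unique {p : ℕ → ℕ} {m : ℕ} (hp : ∀ i, 1 ≤ i → i ≤ m → p i < i)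
    {a c c' n s t : ℕ} (ha : a ≤ m) (hcm : c ≤ m) (hc'm : c' ≤ m)
    (hs : (qf p)^[s] a = c) (ht : (qf p)^[t] a = c')
    (hqc : qf p c = n) (hqc' : qf p c' = n) (hnc : n < c) (hnc' : n < c') : c = c' := by
  rcases le_total s t with h | h
  · exact chain_unique_aux hp ha hcm hs ht hqc hnc hnc' h
  · exact (chain_unique_aux hp ha hc'm ht hs hqc' hnc' hnc h).symm

theorem flatMap_insertAfter (a x : ℕ) (g : ℕ → List ℕ) :
    ∀ cs : List ℕ, cs.Nodup →
      (∀ c ∈ cs, ∀ c' ∈ cs, a ∈ g c → a ∈ g c' → c = c') →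
      cs.flatMap (fun c => insertAfter a x (g c)) = insertAfter a x (cs.flatMap g) := by
  intro cs
  induction cs with
  | nil => intro _ _; rfl
  | cons c cs ih =>
    intro hnd huniq
    rw [List.flatMap_cons, List.flatMap_cons]
    by_cases hac : a ∈ g c
    · have htail : ∀ c' ∈ cs, a ∉ g c' := by
        intro c' hc' hac'
        have hcc := huniq c List.mem_cons_self c' (List.mem_cons_of_mem _ hc') hac hac'
        rw [hcc] at hnd
        exact (List.nodup_cons.1 hnd).1 hc'
      have heq : cs.flatMap (fun c => insertAfter a x (g c)) = cs.flatMap g :=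
        flatMap_congr' (fun c' hc' => insertAfter_of_not_mem _ (htail c' hc'))
      rw [heq, insertAfter_append_left x _ hac]
    · rw [insertAfter_of_not_mem _ hac, insertAfter_append_right x _ hac,
        ih (List.nodup_cons.1 hnd).2
          (fun c1 h1 c2 h2 => huniq c1 (List.mem_cons_of_mem _ h1) c2 (List.mem_cons_of_mem _ h2))]

/-- the key step: adding node `m+1` to the tree inserts it right after its parent -/
theorem pre_step {p : ℕ → ℕ} {m : ℕ} (hp : ∀ i, 1 ≤ i → i ≤ m + 1 → p i < i) :
    ∀ fuel n, n ≤ m → m + 1 - n ≤ fuel →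
      preorderAux p (m + 1) fuel n = insertAfter (p (m + 1)) (m + 1) (preorderAux p m fuel n) := by
  have hp' : ∀ i, 1 ≤ i → i ≤ m → p i < i := fun i h1 h2 => hp i h1 (by omega)
  have ha : p (m + 1) ≤ m := by have := hp (m + 1) (by omega) le_rfl; omega
  intro fuel
  induction fuel with
  | zero => intro n hn hf; omega
  | succ f ih =>
    intro n hn hf
    have hkids : kids p (m + 1) n = (if p (m + 1) = n then [m + 1] else []) ++ kids p m n := by
      unfold kids
      rw [show m + 1 + 1 = (m + 1) + 1 from rfl, List.range_succ, List.filter_append,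
        List.reverse_append]
      congr 1
      simp only [List.filter_cons, List.filter_nil]
      by_cases h : p (m + 1) = n
      · simp [h]
      · simp [h]
    have hm1 : ∀ f', preorderAux p (m + 1) f' (m + 1) = [m + 1] := by
      intro f'
      cases f' with
      | zero => rfl
      | succ f' =>
        rw [preorderAux_succ]
        have hk : kids p (m + 1) (m + 1) = [] := by
          rw [List.eq_nil_iff_forall_not_mem]
          intro c hc
          obtain ⟨h1, h2, h3⟩ := mem_kids.1 hc
          have := hp c h1 h2
          omega
        simp [hk]
    have hkfacts : ∀ c ∈ kids p m n, 1 ≤ c ∧ c ≤ m ∧ p c = n ∧ n < c := by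
      intro c hc
      obtain ⟨h1, h2, h3⟩ := mem_kids.1 hc
      exact ⟨h1, h2, h3, h3 ▸ hp' c h1 h2⟩
    have hflat : (kids p m n).flatMap (preorderAux p (m + 1) f) =
        (kids p m n).flatMap (fun c => insertAfter (p (m + 1)) (m + 1) (preorderAux p m f c)) := by
      apply flatMap_congr'
      intro c hc
      obtain ⟨h1, h2, h3, h4⟩ := hkfacts c hc
      exact ih c h2 (by omega)
    rw [preorderAux_succ, preorderAux_succ, hkids, List.flatMap_append, hflat]
    by_cases h : p (m + 1) = n
    · -- new node is a child of n: it goes first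
      have hnoa : ∀ c ∈ kids p m n,
          insertAfter (p (m + 1)) (m + 1) (preorderAux p m f c) = preorderAux p m f c := by
        intro c hc
        obtain ⟨h1, h2, h3, h4⟩ := hkfacts c hc
        apply insertAfter_of_not_mem
        intro hmem
        have := mem_pre_ge hp' h2 hmem
        omega
      rw [flatMap_congr' hnoa, if_pos h]
      simp only [List.flatMap_cons, List.flatMap_nil, List.append_nil, hm1 f]
      rw [h]
      simp [insertAfter]
    · rw [if_neg h]
      simp only [List.flatMap_nil, List.nil_append]
      have huniq : ∀ c ∈ kids p m n, ∀ c' ∈ kids p m n,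
          p (m + 1) ∈ preorderAux p m f c → p (m + 1) ∈ preorderAux p m f c' → c = c' := by
        intro c hc c' hc' hmc hmc'
        obtain ⟨h1, h2, h3, h4⟩ := hkfacts c hc
        obtain ⟨h1', h2', h3', h4'⟩ := hkfacts c' hc'
        obtain ⟨_, s, hs⟩ := mem_pre_mp hp' f c _ h2 hmc
        obtain ⟨_, t, ht⟩ := mem_pre_mp hp' f c' _ h2' hmc'
        have hqc : qf p c = n := by unfold qf; rw [if_neg (by omega)]; exact h3
        have hqc' : qf p c' = n := by unfold qf; rw [if_neg (by omega)]; exact h3'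
        exact chain_unique hp' ha h2 h2' hs ht hqc hqc' h4 h4'
      rw [flatMap_insertAfter _ _ _ _ (kids_nodup p m n) huniq]
      have : insertAfter (p (m + 1)) (m + 1) (n :: (kids p m n).flatMap (preorderAux p m f)) =
          n :: insertAfter (p (m + 1)) (m + 1) ((kids p m n).flatMap (preorderAux p m f)) := by
        simp [insertAfter, Ne.symm h]
      rw [this]

theorem buildL_eq {p : ℕ → ℕ} : ∀ m, (∀ i, 1 ≤ i → i ≤ m → p i < i) →
    buildL p m = preorderAux p m m 0 := by
  intro m
  induction m with
  | zero => intro _; rfl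
  | succ m ih =>
    intro hp
    have hp' : ∀ i, 1 ≤ i → i ≤ m → p i < i := fun i h1 h2 => hp i h1 (by omega)
    show insertAfter (p (m + 1)) (m + 1) (buildL p m) = _
    rw [ih hp', pre_step hp (m + 1) 0 (Nat.zero_le _) (by omega)]
    congr 1
    exact pre_stab hp' m (m + 1) 0 (Nat.zero_le _) (by omega) (by omega)

/-- the subtree rooted at any descendant is an infix of the traversal -/
theorem subtree_infix {p : ℕ → ℕ} {m : ℕ} (hp : ∀ i, 1 ≤ i → i ≤ m → p i < i) :
    ∀ r n n₀, n ≤ m → (qf p)^[r] n = n₀ →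
      ∃ u w, preorderAux p m (m - n₀) n₀ = u ++ preorderAux p m (m - n) n ++ w := by
  intro r
  induction r with
  | zero =>
    intro n n₀ hn h
    exact ⟨[], [], by rw [← h]; simp⟩
  | succ s ih =>
    intro n n₀ hn h
    rw [Function.iterate_succ_apply'] at h
    by_cases hcn : (qf p)^[s] n = n₀
    · exact ih n n₀ hn hcn
    · set c := (qf p)^[s] n with hc
      have hc0 : c ≠ 0 := by
        intro h0
        rw [h0] at h
        simp [qf] at h
        exact hcn (by rw [h0, ← h])
      have hcm : c ≤ m := le_trans (iter_le hp s hn) hn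
      have hpc : p c = n₀ := by unfold qf at h; rwa [if_neg hc0] at h
      have hn0c : n₀ < c := hpc ▸ hp c (by omega) hcm
      obtain ⟨u', w', hiw⟩ := ih n c hn hc.symm
      obtain ⟨cs₁, cs₂, hsplit⟩ :=
        List.append_of_mem (mem_kids.2 ⟨by omega, hcm, hpc⟩ : c ∈ kids p m n₀)
      have hfuel : m - n₀ = (m - n₀ - 1) + 1 := by omega
      have hstab : preorderAux p m (m - n₀ - 1) c = preorderAux p m (m - c) c :=
        pre_stab hp _ _ c hcm (by omega) (by omega)
      refine ⟨n₀ :: (cs₁.flatMap (preorderAux p m (m - n₀ - 1)) ++ u'),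
        w' ++ cs₂.flatMap (preorderAux p m (m - n₀ - 1)), ?_⟩
      rw [hfuel, preorderAux_succ, hsplit, List.flatMap_append, List.flatMap_cons, hstab, hiw]
      simp

theorem reach_zero {p : ℕ → ℕ} {m : ℕ} (hp : ∀ i, 1 ≤ i → i ≤ m → p i < i) :
    ∀ n, n ≤ m → ∃ r, (qf p)^[r] n = 0 := by
  intro n
  induction n using Nat.strong_induction_on with
  | _ n ih =>
    intro hn
    rcases Nat.eq_zero_or_pos n with h | h
    · exact ⟨0, h⟩
    · have hq : qf p n < n := by
        unfold qf; rw [if_neg (by omega)]; exact hp n h hn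
      obtain ⟨r, hr⟩ := ih (qf p n) hq (le_trans (le_of_lt hq) hn)
      exact ⟨r + 1, by rw [Function.iterate_succ_apply]; exact hr⟩

theorem mem_tail_gt {p : ℕ → ℕ} {m : ℕ} (hp : ∀ i, 1 ≤ i → i ≤ m → p i < i)
    {f n j : ℕ} (hj : j ∈ (kids p m n).flatMap (preorderAux p m f)) : n < j := by
  rcases List.mem_flatMap.1 hj with ⟨c, hc, hjc⟩
  obtain ⟨h1, h2, h3⟩ := mem_kids.1 hc
  have hcj : c ≤ j := mem_pre_ge hp h2 hjc
  have : n < c := h3 ▸ hp c h1 h2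
  omega

end TRhelpers

/-- Preorder-traversal characterization: the final list `L k` equals the
depth-first preorder traversal of the parent tree rooted at `0` in which the
children of each node are visited in decreasing order of timestamp; in
particular, each node is followed in `L k` by a contiguous block consisting
exactly of its proper descendants. -/
theorem preorder_characterization
    (k : ℕ) (p : ℕ → ℕ) (hp : ∀ i, 1 ≤ i → i ≤ k → p i < i) :
    buildL p k = preorderAux p k k 0 ∧
      ∀ n, n ≤ k → ∃ u v w : List ℕ, buildL p k = u ++ n :: v ++ w ∧
        ∀ j, j ∈ v ↔ (j ≤ k ∧ j ≠ n ∧ isAncestor p n j) := by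
  have hanc : ∀ n j : ℕ, isAncestor p n j ↔ ∃ r, (qf p)^[r] j = n := fun n j => Iff.rfl
  refine ⟨buildL_eq k hp, ?_⟩
  intro n hn
  obtain ⟨r, hr⟩ := reach_zero hp n hn
  obtain ⟨u, w, huw⟩ := subtree_infix hp r n 0 hn hr
  obtain ⟨v, hv⟩ := pre_head p k (k - n) n
  have hbuild : buildL p k = u ++ n :: v ++ w := by
    rw [buildL_eq k hp]
    have h0 : preorderAux p k k 0 = preorderAux p k (k - 0) 0 := by norm_num
    rw [h0, huw, hv]
  refine ⟨u, v, w, hbuild, ?_⟩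
  intro j
  have hmem : j ∈ n :: v ↔ j ≤ k ∧ ∃ r, (qf p)^[r] j = n := by
    rw [← hv]
    exact mem_pre hp (k - n) n j hn le_rfl
  constructor
  · intro hjv
    obtain ⟨hjk, hancj⟩ := hmem.1 (List.mem_cons_of_mem _ hjv)
    refine ⟨hjk, ?_, (hanc n j).2 hancj⟩
    -- j ≠ n since everything in the tail is > n
    rcases Nat.eq_zero_or_pos (k - n) with h0 | hpos
    · rw [h0] at hv
      have hv0 : v = [] := by
        have : ([n] : List ℕ) = n :: v := hv
        simpa using this.symm
      rw [hv0] at hjv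
      simp at hjv
    · obtain ⟨f, hf⟩ : ∃ f, k - n = f + 1 := ⟨k - n - 1, by omega⟩
      rw [hf, preorderAux_succ] at hv
      have hvv : v = (kids p k n).flatMap (preorderAux p k f) := by
        injection hv with _ h2
        exact h2.symm
      have := mem_tail_gt hp (hvv ▸ hjv)
      omega
  · rintro ⟨hjk, hjn, hancj⟩
    rcases List.mem_cons.1 (hmem.2 ⟨hjk, (hanc n j).1 hancj⟩) with h | h
    · exact absurd h hjn
    · exact h
end
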